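/- arXiv:math/0209138 — 7 statements merged into one kernel-verified Lean document; each statement's English description precedes it below -/
import Mathlib

section
/- Let α be a type with decidable equality, let v ∈ FreeGroup α be cyclically reduced, and suppose v = w^n for some w ∈ FreeGroup α and some integer n ≥ 1. Then w is cyclically reduced, and the reduced word of v is the concatenation of n copies of the reduced word of w. -/
open FreeGroup List

section Aux
set_option linter.unusedSectionVars false
variable {α : Type*} [DecidableEq α]

/-- The canonical "no cancellation" relation on letters. -/
private def RR : (α × Bool) → (α × Bool) → Prop := fun a b => b ≠ (a.1, !a.2)

lemma chain'_reduce (L : List (α × Bool)) :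
    List.Chain' (fun a b => b ≠ (a.1, !a.2)) (FreeGroup.reduce L) := by
  induction L with
  | nil => exact List.isChain_nil
  | cons x L ih =>
    rw [FreeGroup.reduce.cons]
    cases h : FreeGroup.reduce L with
    | nil => exact List.isChain_singleton _
    | cons hd tl =>
      rw [h] at ih
      by_cases hc : x.1 = hd.1 ∧ x.2 = !hd.2
      · simp only [hc, if_true]
        exact ih.tail
      · simp only [hc, if_false]
        refine List.IsChain.cons_cons ?_ ih
        rintro rfl
        exact hc ⟨rfl, by simp⟩

lemma reduce_eq_self_of_chain' {L : List (α × Bool)}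
    (h : List.Chain' (fun a b => b ≠ (a.1, !a.2)) L) : FreeGroup.reduce L = L := by
  induction L with
  | nil => rfl
  | cons x L ih =>
    rw [FreeGroup.reduce.cons, ih h.tail]
    cases L with
    | nil => rfl
    | cons hd tl =>
      have := List.isChain_cons_cons.1 h |>.1
      simp only []
      rw [if_neg]
      rintro ⟨h1, h2⟩
      exact this (by ext <;> simp [h1, h2])

lemma chain'_toWord (g : FreeGroup α) :
    List.Chain' (fun a b => b ≠ (a.1, !a.2)) g.toWord := by
  rw [← FreeGroup.reduce_toWord]
  exact chain'_reduce _

lemma toWord_mk_of_chain' {L : List (α × Bool)}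
    (h : List.Chain' (fun a b => b ≠ (a.1, !a.2)) L) : (FreeGroup.mk L).toWord = L := by
  rw [FreeGroup.toWord_mk, reduce_eq_self_of_chain' h]

lemma letter_symm {x y : α × Bool} (h : y ≠ (x.1, !x.2)) : x ≠ (y.1, !y.2) := by
  rintro rfl
  exact h (by simp)
end Aux

/-- An element of a free group is cyclically reduced if its reduced word is empty or
its last letter is not the inverse of its first letter. -/
def CyclicallyReduced {α : Type*} [DecidableEq α] (g : FreeGroup α) : Prop :=
  ∀ x ∈ g.toWord.head?, ∀ y ∈ g.toWord.getLast?, y ≠ (x.1, !x.2)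

section Aux2
set_option linter.unusedSectionVars false
variable {α : Type*} [DecidableEq α]

lemma head?_flatten_replicate {L : List (α × Bool)} (m : ℕ) (hm : 1 ≤ m) (hL : L ≠ []) :
    ((List.replicate m L).flatten).head? = L.head? := by
  obtain ⟨m, rfl⟩ := Nat.exists_eq_add_of_le hm
  rw [add_comm, List.replicate_succ, List.flatten_cons, List.head?_append_of_ne_nil _ hL]

lemma getLast?_flatten_replicate {L : List (α × Bool)} (m : ℕ) (hm : 1 ≤ m) (hL : L ≠ []) :
    ((List.replicate m L).flatten).getLast? = L.getLast? := by
  obtain ⟨m, rfl⟩ := Nat.exists_eq_add_of_le hm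
  rw [add_comm, List.replicate_succ', List.flatten_append, List.flatten_cons,
    List.flatten_nil, List.append_nil, List.getLast?_append_of_ne_nil _ hL]

lemma chain'_flatten_replicate {L : List (α × Bool)}
    (hL : List.Chain' (fun a b => b ≠ (a.1, !a.2)) L)
    (hcyc : ∀ x ∈ L.head?, ∀ y ∈ L.getLast?, y ≠ (x.1, !x.2)) (m : ℕ) :
    List.Chain' (fun a b => b ≠ (a.1, !a.2)) ((List.replicate m L).flatten) := by
  induction m with
  | zero => exact List.isChain_nil
  | succ m ih =>
    rw [List.replicate_succ, List.flatten_cons, List.Chain', List.isChain_append]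
    refine ⟨hL, ih, ?_⟩
    intro a ha b hb
    rcases Nat.eq_zero_or_pos m with rfl | hm
    · simp at hb
    · rw [head?_flatten_replicate m hm (by rintro rfl; simp at ha)] at hb
      exact letter_symm (hcyc b hb a ha)

/-- Power of a cyclically reduced element: the reduced word is the concatenation. -/
lemma toWord_pow_of_cyclicallyReduced {u : FreeGroup α} (hu : CyclicallyReduced u) (m : ℕ) :
    (u ^ m).toWord = (List.replicate m u.toWord).flatten := by
  conv_lhs => rw [← FreeGroup.mk_toWord (x := u)]
  rw [FreeGroup.pow_mk, toWord_mk_of_chain' (chain'_flatten_replicate (chain'_toWord u) hu m)]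

/-- Every element is a conjugate of a cyclically reduced element, with no cancellation. -/
lemma exists_decomp (w : FreeGroup α) : ∃ c u : FreeGroup α,
    w = c * u * c⁻¹ ∧ CyclicallyReduced u ∧
      w.toWord = c.toWord ++ u.toWord ++ c⁻¹.toWord := by
  generalize hN : w.toWord.length = N
  induction N using Nat.strong_induction_on generalizing w with
  | _ N ih =>
  by_cases hw : CyclicallyReduced w
  · exact ⟨1, w, by group, hw, by simp [FreeGroup.toWord_one]⟩
  · simp only [CyclicallyReduced, not_forall] at hw
    obtain ⟨x, hx, y, hy, hxy⟩ := hw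
    rw [not_not] at hxy
    subst hxy
    -- w.toWord = x :: L'
    obtain ⟨L', hL'⟩ : ∃ L', w.toWord = x :: L' := by
      cases h : w.toWord with
      | nil => rw [h] at hx; simp at hx
      | cons a t => rw [h] at hx; simp at hx; exact ⟨t, by rw [hx]⟩
    have hL'ne : L' ≠ [] := by
      rintro rfl
      rw [hL'] at hy
      simp only [List.getLast?_singleton, Option.mem_some_iff] at hy
      have := congrArg Prod.snd hy
      simp at this
    -- L' = M ++ [(x.1, !x.2)]
    have hlast : L'.getLast hL'ne = (x.1, !x.2) := by
      have h1 : w.toWord.getLast? = some ((x :: L').getLast (List.cons_ne_nil _ _)) := by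
        rw [hL', List.getLast?_eq_getLast]
      rw [h1] at hy
      have h2 := Option.mem_some_iff.1 hy
      rw [List.getLast_cons hL'ne] at h2
      exact h2
    set M := L'.dropLast with hM
    have hL'eq : L' = M ++ [(x.1, !x.2)] := by
      rw [hM, ← hlast, List.dropLast_append_getLast]
    have hLeq : w.toWord = x :: M ++ [(x.1, !x.2)] := by rw [hL', hL'eq]; simp
    have hchainL := chain'_toWord w
    rw [hLeq] at hchainL
    have hchainM : List.Chain' (fun a b => b ≠ (a.1, !a.2)) M :=
      hchainL.infix ⟨[x], [(x.1, !x.2)], by simp⟩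
    have hMword : (FreeGroup.mk M).toWord = M := toWord_mk_of_chain' hchainM
    have hMlen : M.length < N := by
      rw [← hN, hLeq]
      simp [Nat.lt_succ_iff]
    obtain ⟨c', u, hdec, hucyc, hword⟩ := ih M.length hMlen (FreeGroup.mk M) (by rw [hMword])
    rw [hMword] at hword
    refine ⟨FreeGroup.mk [x] * c', u, ?_, hucyc, ?_⟩
    · have : w = FreeGroup.mk [x] * FreeGroup.mk M * (FreeGroup.mk [x])⁻¹ := by
        rw [FreeGroup.inv_mk]
        have : FreeGroup.invRev [x] = [(x.1, !x.2)] := by simp [FreeGroup.invRev]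
        have hLeq2 : w.toWord = [x] ++ M ++ [(x.1, !x.2)] := hLeq
        rw [this, ← FreeGroup.mk_toWord (x := w), hLeq2, FreeGroup.mul_mk, FreeGroup.mul_mk]
      rw [this, hdec]
      group
    · -- word equation
      have hc'pre : c'.toWord <+: M := ⟨u.toWord ++ c'⁻¹.toWord, by rw [hword]; simp⟩
      have hc'suf : c'⁻¹.toWord <:+ M := ⟨c'.toWord ++ u.toWord, by rw [hword]⟩
      have h1 : (FreeGroup.mk [x] * c').toWord = x :: c'.toWord := by
        conv_lhs => rw [← FreeGroup.mk_toWord (x := c'), FreeGroup.mul_mk]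
        refine toWord_mk_of_chain' ?_
        have : x :: c'.toWord <+: x :: M ++ [(x.1, !x.2)] := by
          obtain ⟨t, ht⟩ := hc'pre
          exact ⟨t ++ [(x.1, !x.2)], by rw [← ht]; simp⟩
        exact hchainL.prefix this
      have h2 : ((FreeGroup.mk [x] * c')⁻¹).toWord = c'⁻¹.toWord ++ [(x.1, !x.2)] := by
        rw [mul_inv_rev, FreeGroup.inv_mk]
        have hinv : FreeGroup.invRev [x] = [(x.1, !x.2)] := by simp [FreeGroup.invRev]
        rw [hinv]
        conv_lhs => rw [← FreeGroup.mk_toWord (x := c'⁻¹), FreeGroup.mul_mk]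
        refine toWord_mk_of_chain' ?_
        have : c'⁻¹.toWord ++ [(x.1, !x.2)] <:+ x :: M ++ [(x.1, !x.2)] := by
          obtain ⟨t, ht⟩ := hc'suf
          exact ⟨x :: t, by rw [List.cons_append, ← List.append_assoc, ht]; rfl⟩
        exact hchainL.suffix this
      rw [h1, h2, hLeq, hword]
      simp

end Aux2

/-- If `v` is cyclically reduced and `v = w ^ n` with `n ≥ 1`, then `w` is cyclically
reduced and the reduced word of `v` is the concatenation of `n` copies of that of `w`. -/
theorem stmt_1 {α : Type*} [DecidableEq α] (v w : FreeGroup α) (n : ℤ) (hn : 1 ≤ n)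
    (hv : CyclicallyReduced v) (hvw : v = w ^ n) :
    CyclicallyReduced w ∧ v.toWord = (List.replicate n.toNat w.toWord).flatten := by
  set m := n.toNat with hm
  have hm1 : 1 ≤ m := by omega
  have hpow : v = w ^ m := by
    rw [hvw, ← zpow_natCast, hm, Int.toNat_of_nonneg (by omega)]
  obtain ⟨c, u, hdec, hucyc, hword⟩ := exists_decomp w
  have hvc : v = c * u ^ m * c⁻¹ := by
    rw [hpow, hdec]
    rw [show c * u * c⁻¹ = (MulAut.conj c) u from rfl, ← map_pow]
    rfl
  by_cases hu1 : u = 1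
  · subst hu1
    have hw1 : w = 1 := by rw [hdec]; group
    subst hw1
    have hv1 : v = 1 := by rw [hpow]; simp
    subst hv1
    constructor
    · intro x hx; simp [FreeGroup.toWord_one] at hx
    · rw [FreeGroup.toWord_one]
      induction m with
      | zero => simp
      | succ k ihk => simp [List.replicate_succ, FreeGroup.toWord_one]
  · have hUne : u.toWord ≠ [] := fun h => hu1 (FreeGroup.toWord_eq_nil_iff.1 h)
    set U := u.toWord with hU
    set C := c.toWord with hC
    set F := (List.replicate m U).flatten with hF
    have hFne : F ≠ [] := by
      have hh := head?_flatten_replicate (L := U) m hm1 hUne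
      intro h
      rw [← hF, h] at hh
      cases hU' : U with
      | nil => exact hUne hU'
      | cons a t => rw [hU'] at hh; simp at hh
    have hpowword : (u ^ m).toWord = F := toWord_pow_of_cyclicallyReduced hucyc m
    -- Chain' structure of w.toWord
    have hchainW := chain'_toWord w
    rw [hword] at hchainW
    rw [List.append_assoc, List.Chain', List.isChain_append] at hchainW
    obtain ⟨hchainC, hrest, hjunc1⟩ := hchainW
    rw [List.isChain_append] at hrest
    obtain ⟨hchainU, hchainCi, hjunc2⟩ := hrest
    -- v.toWord = C ++ F ++ invRev C
    have hCinv : c⁻¹.toWord = FreeGroup.invRev C := by rw [FreeGroup.toWord_inv]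
    have hvword : v.toWord = C ++ F ++ c⁻¹.toWord := by
      have h0 : v = FreeGroup.mk C * FreeGroup.mk F * FreeGroup.mk (c⁻¹.toWord) := by
        rw [hvc]
        congr 1
        · congr 1
          · exact FreeGroup.mk_toWord.symm
          · rw [← hpowword]; exact FreeGroup.mk_toWord.symm
        · exact FreeGroup.mk_toWord.symm
      rw [h0, FreeGroup.mul_mk, FreeGroup.mul_mk]
      refine toWord_mk_of_chain' ?_
      rw [List.append_assoc, List.Chain', List.isChain_append]
      refine ⟨hchainC, ?_, ?_⟩
      · rw [List.isChain_append]
        refine ⟨chain'_flatten_replicate hchainU hucyc m, hchainCi, ?_⟩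
        intro a ha b hb
        rw [hF, getLast?_flatten_replicate m hm1 hUne] at ha
        exact hjunc2 a ha b hb
      · intro a ha b hb
        rw [List.head?_append_of_ne_nil _ hFne, hF,
          head?_flatten_replicate m hm1 hUne] at hb
        refine hjunc1 a ha b ?_
        rw [List.head?_append_of_ne_nil _ hUne]
        exact hb
    -- show C = []
    have hCnil : C = [] := by
      by_contra hCne
      obtain ⟨x₀, C', hCC⟩ := List.exists_cons_of_ne_nil hCne
      rw [hCC] at hvword hCinv
      have hhead : v.toWord.head? = some x₀ := by
        rw [hvword, List.head?_append_of_ne_nil _ (by simp),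
          List.head?_append_of_ne_nil _ (by simp)]
        rfl
      have hlastinv : (FreeGroup.invRev (x₀ :: C')).getLast? = some (x₀.1, !x₀.2) := by
        rw [FreeGroup.invRev]
        simp
      have hlast : v.toWord.getLast? = some (x₀.1, !x₀.2) := by
        rw [hvword, hCinv, List.getLast?_append_of_ne_nil]
        · exact hlastinv
        · intro h
          rw [h] at hlastinv; simp at hlastinv
      exact hv x₀ hhead _ hlast rfl
    have hc1 : c = 1 := FreeGroup.toWord_eq_nil_iff.1 hCnil
    subst hc1
    have hwu : w = u := by rw [hdec]; group
    subst hwu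
    refine ⟨hucyc, ?_⟩
    rw [hvc]
    simp only [one_mul, inv_one, mul_one]
    exact hpowword
end

section
/- Let α be a type with decidable equality and let v ∈ FreeGroup α be cyclically reduced. If some letter occurs exactly once in the reduced word of v, then v is not a proper power: there is no w ∈ FreeGroup α and integer k ≥ 2 with v = w^k. -/
namespace StmtAux

open FreeGroup List

set_option linter.unusedSectionVars false

variable {α : Type*} [DecidableEq α]

/-- The "no cancellation" relation between adjacent letters. -/
def R : (α × Bool) → (α × Bool) → Prop := fun a b => b ≠ (a.1, !a.2)

/-- A word is reduced iff adjacent letters are never mutually inverse. -/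
def Red' (L : List (α × Bool)) : Prop := List.Chain' R L

lemma inv_inv (a : α × Bool) : (((a.1, !a.2) : α × Bool).1, !((a.1, !a.2) : α × Bool).2) = a := by
  simp

lemma inv_eq_swap {a b : α × Bool} : b = (a.1, !a.2) ↔ a = (b.1, !b.2) := by
  constructor <;> rintro rfl <;> simp

lemma R_iff {a b : α × Bool} : R a b ↔ a ≠ (b.1, !b.2) := by
  unfold R
  constructor
  · intro h hc; exact h (inv_eq_swap.mpr hc)
  · intro h hc; exact h (inv_eq_swap.mp hc)

lemma red'_reduce (L : List (α × Bool)) : Red' (FreeGroup.reduce L) := by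
  induction L with
  | nil => exact List.isChain_nil
  | cons x L ih =>
    rw [FreeGroup.reduce.cons]
    cases h : FreeGroup.reduce L with
    | nil => exact List.isChain_singleton x
    | cons y t =>
      rw [h] at ih
      by_cases hc : x.1 = y.1 ∧ x.2 = !y.2
      · simp only [if_pos hc]
        exact ih.tail
      · simp only [if_neg hc]
        refine List.isChain_cons_cons.mpr ⟨?_, ih⟩
        rw [R_iff]
        intro hx
        exact hc ⟨by rw [hx], by rw [hx]⟩

lemma reduce_eq_self {L : List (α × Bool)} (h : Red' L) : FreeGroup.reduce L = L := by
  induction L with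
  | nil => rfl
  | cons x L ih =>
    rw [FreeGroup.reduce.cons, ih h.tail]
    cases L with
    | nil => rfl
    | cons y t =>
      have hxy : R x y := (List.isChain_cons_cons.mp h).1
      have : ¬(x.1 = y.1 ∧ x.2 = !y.2) := by
        intro hc
        exact (R_iff.mp hxy) (Prod.ext hc.1 hc.2)
      simp only [if_neg this]

lemma red'_toWord (x : FreeGroup α) : Red' x.toWord := by
  have := red'_reduce x.toWord
  rwa [FreeGroup.reduce_toWord] at this

lemma toWord_mk_red {L : List (α × Bool)} (h : Red' L) : (FreeGroup.mk L).toWord = L := by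
  rw [FreeGroup.toWord_mk, reduce_eq_self h]

lemma red'_invRev {L : List (α × Bool)} (h : Red' L) : Red' (FreeGroup.invRev L) := by
  have := red'_reduce (FreeGroup.invRev L)
  rwa [FreeGroup.reduce_invRev, reduce_eq_self h] at this

lemma invRev_head? (L : List (α × Bool)) :
    (FreeGroup.invRev L).head? = L.getLast?.map (fun a => (a.1, !a.2)) := by
  rw [FreeGroup.invRev, List.head?_reverse, List.getLast?_map]

lemma invRev_getLast? (L : List (α × Bool)) :
    (FreeGroup.invRev L).getLast? = L.head?.map (fun a => (a.1, !a.2)) := by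
  rw [FreeGroup.invRev, List.getLast?_reverse, List.head?_map]

/-- list-level cyclic reducedness -/
def CRW (L : List (α × Bool)) : Prop :=
  ∀ x ∈ L.head?, ∀ y ∈ L.getLast?, y ≠ (x.1, !x.2)

lemma red'_flatten_replicate {G : List (α × Bool)} (hG : Red' G) (hcr : CRW G) (n : ℕ) :
    Red' ((List.replicate n G).flatten) ∧
      (((List.replicate n G).flatten).head? = G.head? ∨ (List.replicate n G).flatten = []) := by
  induction n with
  | zero => exact ⟨List.isChain_nil, Or.inr rfl⟩
  | succ n ih =>
    rw [List.replicate_succ, List.flatten_cons]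
    constructor
    · refine hG.append ih.1 ?_
      intro x hx y hy
      rcases ih.2 with h | h
      · rw [h] at hy
        rw [R_iff]
        exact hcr y hy x hx
      · rw [h] at hy; simp at hy
    · cases G with
      | nil => right; simp
      | cons a t => left; rw [List.head?_append_of_ne_nil _ (by simp)]

lemma toWord_pow {g : FreeGroup α} (hg : CyclicallyReduced g) (n : ℕ) :
    (g ^ n).toWord = (List.replicate n g.toWord).flatten := by
  conv_lhs => rw [← FreeGroup.mk_toWord (x := g)]
  rw [FreeGroup.pow_mk, FreeGroup.toWord_mk,
    reduce_eq_self (red'_flatten_replicate (red'_toWord g) hg n).1]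

lemma cyclicallyReduced_pow {g : FreeGroup α} (hg : CyclicallyReduced g) (n : ℕ) :
    CyclicallyReduced (g ^ n) := by
  rcases eq_or_ne g.toWord ([] : List (α × Bool)) with hnil | hne
  · have : g = 1 := FreeGroup.toWord_eq_nil_iff.mp hnil
    subst this
    simp only [one_pow]
    intro x hx
    rw [FreeGroup.toWord_one] at hx
    simp at hx
  · intro x hx y hy
    rw [toWord_pow hg n] at hx hy
    cases n with
    | zero => simp at hx
    | succ m =>
      rw [List.replicate_succ, List.flatten_cons, List.head?_append_of_ne_nil _ hne] at hx
      rw [List.replicate_succ', List.flatten_append, List.flatten_cons, List.flatten_nil,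
        List.append_nil, List.getLast?_append_of_ne_nil _ hne] at hy
      exact hg x hx y hy

lemma count_flatten_replicate (ℓ : α × Bool) (G : List (α × Bool)) (n : ℕ) :
    ((List.replicate n G).flatten).count ℓ = n * G.count ℓ := by
  induction n with
  | zero => simp
  | succ n ih =>
    rw [List.replicate_succ, List.flatten_cons, List.count_append, ih]
    ring

lemma mk_singleton_inv (b : α × Bool) :
    (FreeGroup.mk [b])⁻¹ = FreeGroup.mk [(b.1, !b.2)] := by
  rw [FreeGroup.inv_mk]
  congr 1

/-- Every element is a conjugate of a cyclically reduced element. -/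
lemma exists_conj_cyclicallyReduced (w : FreeGroup α) :
    ∃ u c : FreeGroup α, CyclicallyReduced c ∧ w = u * c * u⁻¹ := by
  generalize hn : w.toWord.length = n
  induction n using Nat.strong_induction_on generalizing w with
  | _ n ih =>
  by_cases hw : CyclicallyReduced w
  · exact ⟨1, w, hw, by group⟩
  · unfold CyclicallyReduced at hw
    push_neg at hw
    obtain ⟨x, hx, y, hy, hxy⟩ := hw
    subst hxy
    have hWne : w.toWord ≠ [] := by
      intro h; rw [h] at hx; simp at hx
    have hhead : w.toWord.head? = some x := hx
    have htne : w.toWord.tail ≠ [] := by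
      intro h
      have hW1 : w.toWord = [x] := by
        cases hW : w.toWord with
        | nil => exact absurd hW hWne
        | cons a t =>
          rw [hW] at hhead h
          simp only [List.head?_cons, Option.some.injEq] at hhead
          simp only [List.tail_cons] at h
          rw [hhead, h]
      rw [hW1] at hy
      simp at hy
      have := congrArg Prod.snd hy
      simp at this
    set M := w.toWord.tail.dropLast with hM
    have hdecomp : w.toWord = x :: (M ++ [(x.1, !x.2)]) := by
      cases hW : w.toWord with
      | nil => exact absurd hW hWne
      | cons a t =>
        rw [hW] at hhead
        simp only [List.head?_cons, Option.some.injEq] at hhead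
        have ht : t ≠ [] := by rwa [hW, List.tail_cons] at htne
        have hlast : t.getLast ht = (x.1, !x.2) := by
          rw [hW, List.getLast?_cons, List.getLast?_eq_getLast (l := t) ht] at hy
          simpa using hy
        rw [hhead]
        congr 1
        rw [hM, hW]
        simp only [List.tail_cons]
        rw [← hlast]
        exact (List.dropLast_append_getLast ht).symm
    have hMred : Red' M := by
      refine (red'_toWord w).infix ?_
      exact ⟨[x], [(x.1, !x.2)], by rw [hdecomp]; simp⟩
    have hMlen : M.length < n := by
      have := congrArg List.length hdecomp
      rw [hn] at this
      simp at this
      omega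
    obtain ⟨u, c, hc, huc⟩ := ih M.length hMlen (FreeGroup.mk M) (by rw [toWord_mk_red hMred])
    refine ⟨FreeGroup.mk [x] * u, c, hc, ?_⟩
    have hw' : w = FreeGroup.mk [x] * FreeGroup.mk M * (FreeGroup.mk [x])⁻¹ := by
      rw [mk_singleton_inv, FreeGroup.mul_mk, FreeGroup.mul_mk, List.append_assoc,
        List.singleton_append, ← hdecomp, FreeGroup.mk_toWord]
    rw [hw', huc]
    group

/-- Key lemma: counts of letters agree for cyclically reduced conjugates. -/
lemma count_eq_of_conj (ℓ : α × Bool) :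
    ∀ n (u g v : FreeGroup α), u.toWord.length = n → CyclicallyReduced v →
      CyclicallyReduced g → v = u * g * u⁻¹ →
      v.toWord.count ℓ = g.toWord.count ℓ := by
  intro n
  induction n using Nat.strong_induction_on with
  | _ n ih =>
  intro u g v hlen hv hg hvug
  rcases eq_or_ne u 1 with rfl | hu
  · rw [hvug]; group
  · have hUne : u.toWord ≠ [] := fun h => hu (FreeGroup.toWord_eq_nil_iff.mp h)
    obtain ⟨D, b, hU⟩ : ∃ D b, u.toWord = D ++ [b] :=
      ⟨_, _, (List.dropLast_append_getLast hUne).symm⟩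
    have hDred : Red' D := (red'_toWord u).prefix (hU ▸ List.prefix_append D [b])
    have hDlen : D.length < n := by
      have := congrArg List.length hU
      rw [hlen] at this
      simp at this
      omega
    have hu' : u = FreeGroup.mk D * FreeGroup.mk [b] := by
      rw [FreeGroup.mul_mk, ← hU, FreeGroup.mk_toWord]
    have hDword : (FreeGroup.mk D).toWord = D := toWord_mk_red hDred
    have hjunc : ∀ x ∈ D.getLast?, R x b := by
      have h0 : Red' (D ++ [b]) := by rw [← hU]; exact red'_toWord u
      have := (List.isChain_append.mp h0).2.2
      intro x hx
      exact this x hx b rfl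
    obtain ⟨G, hG⟩ : ∃ L, g.toWord = L := ⟨_, rfl⟩
    have hGred : Red' G := hG ▸ red'_toWord g
    have hgCR : ∀ x ∈ G.head?, ∀ y ∈ G.getLast?, y ≠ (x.1, !x.2) := by
      rw [← hG]; exact hg
    have hgmk : g = FreeGroup.mk G := by rw [← hG, FreeGroup.mk_toWord]
    rw [hG]
    have hv' : v = FreeGroup.mk D * (FreeGroup.mk [b] * g * FreeGroup.mk [(b.1, !b.2)]) *
        (FreeGroup.mk D)⁻¹ := by
      rw [hvug, hu', ← mk_singleton_inv]
      group
    clear hg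
    revert hG hGred hgCR hgmk
    cases G with
    | nil =>
      intro hG hGred hgCR hgmk
      -- G = [], g = 1
      have hg1 : g = 1 := FreeGroup.toWord_eq_nil_iff.mp hG
      have hbb : FreeGroup.mk [b] * FreeGroup.mk [(b.1, !b.2)] = 1 := by
        rw [← mk_singleton_inv]
        group
      have hveq : v = FreeGroup.mk D * (1 : FreeGroup α) * (FreeGroup.mk D)⁻¹ := by
        rw [hv', hg1, mul_one, hbb]
      have h1 := ih D.length hDlen (FreeGroup.mk D) 1 v (by rw [hDword]) hv
        (by intro x hx; rw [FreeGroup.toWord_one] at hx; simp at hx) hveq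
      rw [h1, FreeGroup.toWord_one]
    | cons a t =>
    intro hG hGred hgCR hgmk
    by_cases hcase2 : a = (b.1, !b.2)
    · -- cancellation on the left: g' = mk (t ++ [(b.1, !b.2)])
      subst hcase2
      have hg' : FreeGroup.mk [b] * g * FreeGroup.mk [(b.1, !b.2)] =
          FreeGroup.mk (t ++ [(b.1, !b.2)]) := by
        rw [hgmk,
          show ((b.1, !b.2) :: t) = [(b.1, !b.2)] ++ t from rfl, ← FreeGroup.mul_mk,
          ← mk_singleton_inv, ← FreeGroup.mul_mk]
        rw [← mk_singleton_inv]
        group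
      have htred : Red' t := hGred.tail
      have hthead : ∀ y ∈ t.head?, y ≠ b := by
        intro y hy
        have := (List.isChain_cons.mp hGred).1 y hy
        rw [R_iff] at this
        intro hyb
        exact this (by rw [hyb])
      have htlast : ∀ y ∈ t.getLast?, y ≠ b := by
        intro y hy hyb
        match t, hy, hthead with
        | a' :: t', hy, hthead =>
          have hglast : ((b.1, !b.2) :: a' :: t').getLast? = some y := by
            rw [List.getLast?_cons_cons]; exact hy
          have := hgCR (b.1, !b.2) rfl y hglast
          rw [inv_inv] at this
          exact this hyb
      have hred' : Red' (t ++ [(b.1, !b.2)]) := by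
        refine htred.append (List.isChain_singleton _) ?_
        intro x hx y hy
        simp only [List.head?_cons, Option.mem_def, Option.some.injEq] at hy
        subst hy
        rw [R_iff, inv_inv]
        exact htlast x hx
      have hword : (FreeGroup.mk (t ++ [(b.1, !b.2)])).toWord = t ++ [(b.1, !b.2)] :=
        toWord_mk_red hred'
      have hCR : CyclicallyReduced (FreeGroup.mk (t ++ [(b.1, !b.2)])) := by
        intro x hx y hy
        rw [hword] at hx hy
        rw [List.getLast?_append_of_ne_nil _ (by simp)] at hy
        simp only [List.getLast?_singleton, Option.mem_def, Option.some.injEq] at hy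
        subst hy
        match t, hx, hthead with
        | [], hx, _ =>
          simp only [List.nil_append, List.head?_cons, Option.mem_def, Option.some.injEq] at hx
          subst hx
          intro hcon
          have := congrArg Prod.snd hcon
          simp at this
        | a' :: t', hx, hthead =>
          rw [List.head?_append_of_ne_nil _ (by simp)] at hx
          simp only [List.head?_cons, Option.mem_def, Option.some.injEq] at hx
          subst hx
          intro hcon
          rw [inv_eq_swap, inv_inv] at hcon
          exact hthead a' rfl hcon
      have heq := ih D.length hDlen (FreeGroup.mk D) (FreeGroup.mk (t ++ [(b.1, !b.2)])) v
        (by rw [hDword]) hv hCR (by rw [hv', hg'])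
      rw [heq, hword, List.count_append]
      simp only [List.count_cons, List.count_singleton, List.count_nil]
      omega
    · by_cases hcase3 : (a :: t).getLast? = some b
      · -- cancellation on the right: a :: t = d ++ [b], g' = mk (b :: d)
        obtain ⟨d, hGd⟩ : ∃ d, a :: t = d ++ [b] :=
          ⟨_, (List.dropLast_append_getLast? b hcase3).symm⟩
        have hdred : Red' d := hGred.prefix (hGd ▸ List.prefix_append d [b])
        have hg' : FreeGroup.mk [b] * g * FreeGroup.mk [(b.1, !b.2)] =
            FreeGroup.mk (b :: d) := by
          rw [hgmk, hGd, ← FreeGroup.mul_mk, ← mk_singleton_inv,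
            show (b :: d) = [b] ++ d from rfl, ← FreeGroup.mul_mk]
          group
        have hdjunc : ∀ x ∈ d.getLast?, R x b :=
          fun x hx => (List.isChain_append.mp (hGd ▸ hGred)).2.2 x hx b rfl
        have hdhead : ∀ y ∈ d.head?, y ≠ (b.1, !b.2) := by
          intro y hy hyb
          have hdne : d ≠ [] := by rintro rfl; simp at hy
          have hgh : (a :: t).head? = some y := by
            rw [hGd, List.head?_append_of_ne_nil _ hdne]
            exact hy
          have := hgCR y hgh b hcase3
          rw [hyb, inv_inv] at this
          exact this rfl
        have hred' : Red' (b :: d) := by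
          refine List.isChain_cons.mpr ⟨?_, hdred⟩
          intro y hy
          exact hdhead y hy
        have hword : (FreeGroup.mk (b :: d)).toWord = b :: d := toWord_mk_red hred'
        have hCR : CyclicallyReduced (FreeGroup.mk (b :: d)) := by
          intro x hx y hy
          rw [hword] at hx hy
          simp only [List.head?_cons, Option.mem_def, Option.some.injEq] at hx
          subst hx
          match d, hy, hdjunc with
          | [], hy, _ =>
            simp only [List.getLast?_singleton, Option.mem_def, Option.some.injEq] at hy
            intro hcon
            rw [← hy] at hcon
            have := congrArg Prod.snd hcon
            simp at this
          | a' :: t', hy, hdjunc =>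
            have hy' : (a' :: t').getLast? = some y := by
              rw [List.getLast?_cons_cons] at hy
              exact hy
            intro hcon
            exact R_iff.mp (hdjunc y hy') hcon
        have heq := ih D.length hDlen (FreeGroup.mk D) (FreeGroup.mk (b :: d)) v
          (by rw [hDword]) hv hCR (by rw [hv', hg'])
        rw [heq, hword, hGd, List.count_append]
        simp only [List.count_cons, List.count_singleton, List.count_nil]
        omega
      · -- no cancellation at all: contradicts cyclic reducedness of v
        exfalso
        have hmidred : Red' ((a :: t) ++ [(b.1, !b.2)]) := by
          refine hGred.append (List.isChain_singleton _) ?_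
          intro x hx y hy
          simp only [List.head?_cons, Option.mem_def, Option.some.injEq] at hy
          subst hy
          rw [R_iff, inv_inv]
          intro hxb
          exact hcase3 (by rw [← hxb]; exact hx)
        have hWred : Red' (b :: ((a :: t) ++ [(b.1, !b.2)])) := by
          refine List.isChain_cons.mpr ⟨?_, hmidred⟩
          intro y hy
          rw [List.head?_append_of_ne_nil _ (by simp)] at hy
          simp only [List.head?_cons, Option.mem_def, Option.some.injEq] at hy
          subst hy
          exact fun hc => hcase2 hc
        have hg' : FreeGroup.mk [b] * g * FreeGroup.mk [(b.1, !b.2)] =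
            FreeGroup.mk (b :: ((a :: t) ++ [(b.1, !b.2)])) := by
          rw [hgmk, FreeGroup.mul_mk, FreeGroup.mul_mk]
          rfl
        have hvmk : v = FreeGroup.mk (D ++ (b :: ((a :: t) ++ [(b.1, !b.2)])) ++
            FreeGroup.invRev D) := by
          rw [hv', hg', FreeGroup.inv_mk, ← FreeGroup.mul_mk, ← FreeGroup.mul_mk]
        have hWlast : (b :: ((a :: t) ++ [(b.1, !b.2)])).getLast? = some (b.1, !b.2) := by
          rw [show (b :: ((a :: t) ++ [(b.1, !b.2)])) = (b :: (a :: t)) ++ [(b.1, !b.2)] from rfl,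
            List.getLast?_append_of_ne_nil _ (by simp)]
          rfl
        have htotred : Red' (D ++ (b :: ((a :: t) ++ [(b.1, !b.2)])) ++ FreeGroup.invRev D) := by
          refine (hDred.append hWred ?_).append (red'_invRev hDred) ?_
          · intro x hx y hy
            simp only [List.head?_cons, Option.mem_def, Option.some.injEq] at hy
            subst hy
            exact hjunc x hx
          · intro x hx y hy
            rw [List.getLast?_append_of_ne_nil _ (by simp), hWlast] at hx
            simp only [Option.mem_def, Option.some.injEq] at hx
            subst hx
            rw [invRev_head? D] at hy
            simp only [Option.mem_def, Option.map_eq_some_iff] at hy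
            obtain ⟨z, hz, rfl⟩ := hy
            show (z.1, !z.2) ≠ ((b.1, !b.2).1, !(b.1, !b.2).2)
            rw [inv_inv]
            intro hcon
            exact hjunc z hz hcon.symm
        have hvword : v.toWord = D ++ (b :: ((a :: t) ++ [(b.1, !b.2)])) ++
            FreeGroup.invRev D := by
          rw [hvmk, toWord_mk_red htotred]
        match D, hvword, hjunc with
        | [], hvword, _ =>
          have h1 : v.toWord.head? = some b := by
            rw [hvword]
            rfl
          have h2 : v.toWord.getLast? = some (b.1, !b.2) := by
            rw [hvword]
            simp only [List.nil_append, FreeGroup.invRev_empty, List.append_nil]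
            exact hWlast
          exact hv b h1 (b.1, !b.2) h2 rfl
        | e :: D', hvword, _ =>
          have hinvne : FreeGroup.invRev (e :: D') ≠ [] := by
            simp [FreeGroup.invRev]
          have h1 : v.toWord.head? = some e := by
            rw [hvword]
            rfl
          have h2 : v.toWord.getLast? = some (e.1, !e.2) := by
            rw [hvword, List.getLast?_append_of_ne_nil _ hinvne, invRev_getLast?]
            rfl
          exact hv e h1 (e.1, !e.2) h2 rfl

end StmtAux

/-- If `v` is cyclically reduced and some letter occurs exactly once in its reduced word,
then `v` is not a proper power. -/
theorem stmt_3 {α : Type*} [DecidableEq α] (v : FreeGroup α)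
    (hv : CyclicallyReduced v) (ℓ : α × Bool) (hℓ : v.toWord.count ℓ = 1) :
    ¬ ∃ (w : FreeGroup α) (k : ℤ), 2 ≤ k ∧ v = w ^ k := by
  rintro ⟨w, k, hk, rfl⟩
  set n : ℕ := k.toNat with hn
  have hkn : (k : ℤ) = (n : ℤ) := by omega
  have hpow : w ^ k = w ^ n := by rw [hkn, zpow_natCast]
  rw [hpow] at hv hℓ
  obtain ⟨u, c, hc, rfl⟩ := StmtAux.exists_conj_cyclicallyReduced w
  have hconj : (u * c * u⁻¹) ^ n = u * c ^ n * u⁻¹ := by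
    induction n with
    | zero => group
    | succ m ihm => rw [pow_succ, pow_succ, ihm]; group
  rw [hconj] at hv hℓ
  have hcount := StmtAux.count_eq_of_conj ℓ u.toWord.length u (c ^ n) _ rfl hv
    (StmtAux.cyclicallyReduced_pow hc n) rfl
  rw [hcount, StmtAux.toWord_pow hc n, StmtAux.count_flatten_replicate] at hℓ
  have hdvd : n ∣ 1 := ⟨_, hℓ.symm⟩
  have := Nat.le_of_dvd one_pos hdvd
  omega
end

section
/- For all integers p, q ≥ 2 and n ≥ 1, none of the following three elements of F₂ is a proper power: w₁ = a^{-(p+1)} · b; w₂ = (a·b⁻¹·a⁻¹·b)^n · b^q · (b·a⁻¹·b⁻¹·a)^n · a^{p+1}; w₃ = b⁻¹ · (a⁻¹·b·a·b⁻¹)^n · b^{-q} · (b⁻¹·a·b·a⁻¹)^n. (These are the elements λμ⁻¹, νλ⁻¹ and μν⁻¹ of F₂ = π₁ of the handlebody complementary to the Seifert surface, arising from the first once-punctured torus for the knot K_n of Figure 3, where λ = a^{-(p+1)}, μ = b⁻¹, ν = (a·b⁻¹·a⁻¹·b)^n · b^q · (b·a⁻¹·b⁻¹·a)^n.) -/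
open Finset AddMonoidAlgebra

/-! Auxiliary: a wreath-product-like group `W A` (Fox derivative / Magnus embedding style):
pairs `(p, g)` with `p` in the group algebra `ℤ[A]` and `g : A`, with multiplication
`(p, g)(q, h) = (p + x^g q, g + h)`. -/

structure W (A : Type) [AddCommGroup A] where
  p : AddMonoidAlgebra ℤ A
  g : A

namespace W
variable {A : Type} [AddCommGroup A]

noncomputable instance : Mul (W A) := ⟨fun x y => ⟨x.p + single x.g 1 * y.p, x.g + y.g⟩⟩
noncomputable instance : One (W A) := ⟨⟨0, 0⟩⟩
noncomputable instance : Inv (W A) := ⟨fun x => ⟨-(single (-x.g) 1 * x.p), -x.g⟩⟩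

lemma mul_def (x y : W A) : x * y = ⟨x.p + single x.g 1 * y.p, x.g + y.g⟩ := rfl
lemma inv_def (x : W A) : x⁻¹ = ⟨-(single (-x.g) 1 * x.p), -x.g⟩ := rfl
lemma one_def : (1 : W A) = ⟨0, 0⟩ := rfl
lemma single_zero_one : (single (0:A) (1:ℤ)) = (1 : AddMonoidAlgebra ℤ A) := rfl

noncomputable instance : Group (W A) where
  mul_assoc x y z := by
    simp only [mul_def, mk.injEq]
    refine ⟨?_, add_assoc _ _ _⟩
    rw [mul_add, ← mul_assoc, single_mul_single, one_mul]
    ring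
  one_mul x := by simp only [one_def, mul_def, single_zero_one, one_mul, zero_add]
  mul_one x := by simp only [mul_def, one_def, mul_zero, add_zero]
  inv_mul_cancel x := by
    simp only [inv_def, mul_def, one_def, mk.injEq]
    exact ⟨neg_add_cancel _, neg_add_cancel _⟩

lemma pow_def (x : W A) (K : ℕ) :
    x ^ K = ⟨(∑ i ∈ range K, single (i • x.g) (1:ℤ)) * x.p, K • x.g⟩ := by
  induction K with
  | zero => simp [one_def]
  | succ K ih => rw [pow_succ, ih, mul_def, sum_range_succ, add_mul, succ_nsmul]

lemma p_zpow (r : AddMonoidAlgebra ℤ A) (m : ℤ) : (⟨r, 0⟩ : W A) ^ m = ⟨m • r, 0⟩ := by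
  have hnat : ∀ K : ℕ, (⟨r, 0⟩ : W A) ^ K = ⟨(K : ℤ) • r, 0⟩ := by
    intro K
    rw [pow_def]
    simp only [smul_zero, sum_const, card_range, single_zero_one, smul_mul_assoc, one_mul,
      natCast_zsmul]
  obtain ⟨K, rfl | rfl⟩ := Int.eq_nat_or_neg m
  · rw [zpow_natCast, hnat]
  · rw [zpow_neg, zpow_natCast, hnat, inv_def]
    simp only [neg_zero, single_zero_one, one_mul, neg_smul]

lemma g_zpow (g : A) (m : ℤ) : (⟨0, g⟩ : W A) ^ m = ⟨0, m • g⟩ := by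
  have hnat : ∀ K : ℕ, ∀ h : A, (⟨0, h⟩ : W A) ^ K = ⟨0, (K : ℤ) • h⟩ := by
    intro K h
    rw [pow_def]
    simp [natCast_zsmul]
  obtain ⟨K, rfl | rfl⟩ := Int.eq_nat_or_neg m
  · rw [zpow_natCast, hnat]
  · rw [zpow_neg, zpow_natCast, hnat, inv_def]
    simp

end W

/-! Auxiliary: support max/min of products of Laurent polynomials `ℤ[ℤ]`. -/

abbrev R1 := AddMonoidAlgebra ℤ ℤ
abbrev R2 := AddMonoidAlgebra ℤ (ℤ × ℤ)

noncomputable instance instCoeFunAMA {G : Type*} : CoeFun (AddMonoidAlgebra ℤ G) (fun _ => G → ℤ) :=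
  ⟨fun f => f.coeff⟩

namespace R1aux

lemma supp_ne {f : R1} (hf : f ≠ 0) : f.coeff.support.Nonempty :=
  Finsupp.support_nonempty_iff.2 (fun h => hf (AddMonoidAlgebra.coeff_eq_zero.1 h))

lemma apply_max_mul (f g : R1) (hf : f ≠ 0) (hg : g ≠ 0) :
    (f * g) (f.coeff.support.max' (supp_ne hf) + g.coeff.support.max' (supp_ne hg)) =
      f (f.coeff.support.max' (supp_ne hf)) * g (g.coeff.support.max' (supp_ne hg)) := by
  classical
  set Mf := f.coeff.support.max' (supp_ne hf) with hMf
  set Mg := g.coeff.support.max' (supp_ne hg) with hMg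
  rw [AddMonoidAlgebra.coeff_mul, Finsupp.sum]
  rw [Finset.sum_eq_single_of_mem Mf (f.coeff.support.max'_mem _) ?h1]
  · rw [Finsupp.sum, Finset.sum_eq_single_of_mem Mg (g.coeff.support.max'_mem _) ?h2]
    · rw [if_pos rfl]
    · intro a₂ ha₂ hne
      rw [if_neg]
      have h1 : a₂ ≤ Mg := Finset.le_max' _ _ ha₂
      omega
  · intro a₁ ha₁ hne
    rw [Finsupp.sum]
    apply Finset.sum_eq_zero
    intro a₂ ha₂
    rw [if_neg]
    have h1 : a₁ ≤ Mf := Finset.le_max' _ _ ha₁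
    have h2 : a₂ ≤ Mg := Finset.le_max' _ _ ha₂
    omega

lemma apply_min_mul (f g : R1) (hf : f ≠ 0) (hg : g ≠ 0) :
    (f * g) (f.coeff.support.min' (supp_ne hf) + g.coeff.support.min' (supp_ne hg)) =
      f (f.coeff.support.min' (supp_ne hf)) * g (g.coeff.support.min' (supp_ne hg)) := by
  classical
  set Mf := f.coeff.support.min' (supp_ne hf) with hMf
  set Mg := g.coeff.support.min' (supp_ne hg) with hMg
  rw [AddMonoidAlgebra.coeff_mul, Finsupp.sum]
  rw [Finset.sum_eq_single_of_mem Mf (f.coeff.support.min'_mem _) ?h1]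
  · rw [Finsupp.sum, Finset.sum_eq_single_of_mem Mg (g.coeff.support.min'_mem _) ?h2]
    · rw [if_pos rfl]
    · intro a₂ ha₂ hne
      rw [if_neg]
      have h1 : Mg ≤ a₂ := Finset.min'_le _ _ ha₂
      omega
  · intro a₁ ha₁ hne
    rw [Finsupp.sum]
    apply Finset.sum_eq_zero
    intro a₂ ha₂
    rw [if_neg]
    have h1 : Mf ≤ a₁ := Finset.min'_le _ _ ha₁
    have h2 : Mg ≤ a₂ := Finset.min'_le _ _ ha₂
    omega

lemma max'_mul (f g : R1) (hf : f ≠ 0) (hg : g ≠ 0) (hfg : f * g ≠ 0) :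
    (f * g).coeff.support.max' (supp_ne hfg) =
      f.coeff.support.max' (supp_ne hf) + g.coeff.support.max' (supp_ne hg) := by
  classical
  apply le_antisymm
  · apply Finset.max'_le
    intro y hy
    have := AddMonoidAlgebra.support_coeff_mul_subset f g hy
    rw [Finset.mem_add] at this
    obtain ⟨s, hs, t, ht, rfl⟩ := this
    exact add_le_add (Finset.le_max' _ _ hs) (Finset.le_max' _ _ ht)
  · apply Finset.le_max'
    rw [Finsupp.mem_support_iff, apply_max_mul f g hf hg]
    exact mul_ne_zero (Finsupp.mem_support_iff.1 (f.coeff.support.max'_mem _))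
      (Finsupp.mem_support_iff.1 (g.coeff.support.max'_mem _))

lemma min'_mul (f g : R1) (hf : f ≠ 0) (hg : g ≠ 0) (hfg : f * g ≠ 0) :
    (f * g).coeff.support.min' (supp_ne hfg) =
      f.coeff.support.min' (supp_ne hf) + g.coeff.support.min' (supp_ne hg) := by
  classical
  apply le_antisymm
  · apply Finset.min'_le
    rw [Finsupp.mem_support_iff, apply_min_mul f g hf hg]
    exact mul_ne_zero (Finsupp.mem_support_iff.1 (f.coeff.support.min'_mem _))
      (Finsupp.mem_support_iff.1 (g.coeff.support.min'_mem _))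
  · apply Finset.le_min'
    intro y hy
    have := AddMonoidAlgebra.support_coeff_mul_subset f g hy
    rw [Finset.mem_add] at this
    obtain ⟨s, hs, t, ht, rfl⟩ := this
    exact add_le_add (Finset.min'_le _ _ hs) (Finset.min'_le _ _ ht)

/-! The "geometric sum" `SK K g = 1 + x^g + ⋯ + x^{(K-1)g}`. -/

noncomputable def SK (K : ℕ) (g : ℤ) : R1 := ∑ i ∈ range K, single ((i:ℤ) * g) (1:ℤ)

lemma SK_apply (K : ℕ) (g y : ℤ) :
    SK K g y = ∑ i ∈ range K, if (i:ℤ) * g = y then (1:ℤ) else 0 := by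
  rw [SK, AddMonoidAlgebra.coeff_sum, Finsupp.finset_sum_apply]
  exact Finset.sum_congr rfl fun i _ => Finsupp.single_apply

lemma SK_apply_mem {K : ℕ} {g : ℤ} (hg : g ≠ 0) {i : ℕ} (hi : i < K) :
    SK K g ((i:ℤ) * g) = 1 := by
  rw [SK_apply]
  rw [Finset.sum_eq_single_of_mem i (Finset.mem_range.2 hi)]
  · rw [if_pos rfl]
  · intro j _ hne
    rw [if_neg]
    intro h
    have : (j : ℤ) = (i : ℤ) := mul_right_cancel₀ hg h
    exact hne (by exact_mod_cast this)

lemma SK_zero_or_one {K : ℕ} {g : ℤ} (hg : g ≠ 0) (y : ℤ) :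
    SK K g y = 0 ∨ SK K g y = 1 := by
  classical
  by_cases h : ∃ i ∈ range K, (i:ℤ) * g = y
  · obtain ⟨i, hi, rfl⟩ := h
    exact Or.inr (SK_apply_mem hg (Finset.mem_range.1 hi))
  · left
    rw [SK_apply]
    apply Finset.sum_eq_zero
    intro i hi
    rw [if_neg]
    exact fun he => h ⟨i, hi, he⟩

lemma SK_support {K : ℕ} {g y : ℤ} (hy : SK K g y ≠ 0) : ∃ i < K, y = (i:ℤ) * g := by
  rw [SK_apply] at hy
  obtain ⟨i, hi, hne⟩ := Finset.exists_ne_zero_of_sum_ne_zero hy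
  refine ⟨i, Finset.mem_range.1 hi, ?_⟩
  by_contra h
  exact hne (if_neg fun he => h he.symm)

lemma SK_ne_zero {K : ℕ} (hK : 1 ≤ K) {g : ℤ} (hg : g ≠ 0) : SK K g ≠ 0 := by
  intro h
  have h0 := SK_apply_mem (K := K) hg (i := 0) hK
  rw [h] at h0
  simp at h0

lemma SK_max' {K : ℕ} (hK : 1 ≤ K) {g : ℤ} (hg : g ≠ 0) :
    (SK K g).coeff.support.max' (supp_ne (SK_ne_zero hK hg)) -
    (SK K g).coeff.support.min' (supp_ne (SK_ne_zero hK hg)) = ((K : ℤ) - 1) * |g| := by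
  have h0 : (0:ℤ) ∈ (SK K g).coeff.support := by
    rw [Finsupp.mem_support_iff]
    have h := SK_apply_mem (K := K) hg (i := 0) hK
    simp only [Nat.cast_zero, zero_mul] at h
    omega
  have hK1 : ((K:ℤ) - 1) * g ∈ (SK K g).coeff.support := by
    rw [Finsupp.mem_support_iff]
    have h := SK_apply_mem (K := K) hg (i := K - 1) (by omega)
    have hc : ((K - 1 : ℕ) : ℤ) = (K : ℤ) - 1 := by
      push_cast [Nat.cast_sub hK]; ring
    rw [hc] at h
    omega
  rcases lt_or_gt_of_ne hg with hgneg | hgpos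
  · have hmax : (SK K g).coeff.support.max' (supp_ne (SK_ne_zero hK hg)) = 0 := by
      apply le_antisymm
      · apply Finset.max'_le
        intro y hy
        obtain ⟨i, hi, rfl⟩ := SK_support (Finsupp.mem_support_iff.1 hy)
        have : (0:ℤ) ≤ (i:ℤ) := Int.natCast_nonneg i
        nlinarith
      · exact Finset.le_max' _ _ h0
    have hmin : (SK K g).coeff.support.min' (supp_ne (SK_ne_zero hK hg)) = ((K:ℤ) - 1) * g := by
      apply le_antisymm
      · exact Finset.min'_le _ _ hK1
      · apply Finset.le_min'
        intro y hy
        obtain ⟨i, hi, rfl⟩ := SK_support (Finsupp.mem_support_iff.1 hy)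
        have h1 : (i:ℤ) ≤ (K:ℤ) - 1 := by
          have h2 : (i:ℤ) < (K:ℤ) := by exact_mod_cast hi
          omega
        nlinarith
    rw [hmax, hmin, abs_of_neg hgneg]
    ring
  · have hmax : (SK K g).coeff.support.max' (supp_ne (SK_ne_zero hK hg)) = ((K:ℤ) - 1) * g := by
      apply le_antisymm
      · apply Finset.max'_le
        intro y hy
        obtain ⟨i, hi, rfl⟩ := SK_support (Finsupp.mem_support_iff.1 hy)
        have h1 : (i:ℤ) ≤ (K:ℤ) - 1 := by
          have h2 : (i:ℤ) < (K:ℤ) := by exact_mod_cast hi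
          omega
        nlinarith
      · exact Finset.le_max' _ _ hK1
    have hmin : (SK K g).coeff.support.min' (supp_ne (SK_ne_zero hK hg)) = 0 := by
      apply le_antisymm
      · exact Finset.min'_le _ _ h0
      · apply Finset.le_min'
        intro y hy
        obtain ⟨i, hi, rfl⟩ := SK_support (Finsupp.mem_support_iff.1 hy)
        positivity
    rw [hmax, hmin, abs_of_pos hgpos]
    ring

/-- Core divisibility lemma. -/
lemma core {K : ℕ} (hK : 1 ≤ K) {g : ℤ} (hg : g ≠ 0) {Q P : R1} {lo hi : ℤ}
    (hlo : P lo ≠ 0) (hhi : P hi ≠ 0) (hsupp : ∀ x, P x ≠ 0 → lo ≤ x ∧ x ≤ hi)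
    (hPQ : SK K g * Q = P) :
    ((K:ℤ) - 1) * |g| ≤ hi - lo ∧
      (((K:ℤ) - 1) * |g| = hi - lo → ∃ c : ℤ, ∀ x, P x = 0 ∨ P x = c) := by
  classical
  have hP : P ≠ 0 := fun h => hlo (by rw [h]; rfl)
  have hS : SK K g ≠ 0 := SK_ne_zero hK hg
  have hQ : Q ≠ 0 := by
    rintro rfl
    rw [mul_zero] at hPQ
    exact hP hPQ.symm
  have hfg : SK K g * Q ≠ 0 := by rw [hPQ]; exact hP
  have hmaxP : (SK K g * Q).coeff.support.max' (supp_ne hfg) = hi := by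
    apply le_antisymm
    · apply Finset.max'_le
      intro y hy
      rw [hPQ] at hy
      exact (hsupp y (Finsupp.mem_support_iff.1 hy)).2
    · apply Finset.le_max'
      rw [Finsupp.mem_support_iff, hPQ]
      exact hhi
  have hminP : (SK K g * Q).coeff.support.min' (supp_ne hfg) = lo := by
    apply le_antisymm
    · apply Finset.min'_le
      rw [Finsupp.mem_support_iff, hPQ]
      exact hlo
    · apply Finset.le_min'
      intro y hy
      rw [hPQ] at hy
      exact (hsupp y (Finsupp.mem_support_iff.1 hy)).1
  have hmax := max'_mul (SK K g) Q hS hQ hfg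
  have hmin := min'_mul (SK K g) Q hS hQ hfg
  rw [hmaxP] at hmax
  rw [hminP] at hmin
  have hSspread := SK_max' hK hg
  have hQspread : Q.coeff.support.min' (supp_ne hQ) ≤ Q.coeff.support.max' (supp_ne hQ) :=
    Finset.min'_le _ _ (Q.coeff.support.max'_mem _)
  constructor
  · omega
  · intro heq
    have hQd : Q.coeff.support.max' (supp_ne hQ) = Q.coeff.support.min' (supp_ne hQ) := by omega
    set d := Q.coeff.support.min' (supp_ne hQ) with hd
    have hsub : Q.coeff.support ⊆ {d} := by
      intro y hy
      rw [Finset.mem_singleton]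
      have h1 := Finset.le_max' _ _ hy
      have h2 := Finset.min'_le _ _ hy
      omega
    have hQsingle : Q = single d (Q d) :=
      AddMonoidAlgebra.coeff_injective (Finsupp.support_subset_singleton.1 hsub)
    refine ⟨Q d, fun x => ?_⟩
    have hx : P x = SK K g (x - d) * Q d := by
      rw [← hPQ, hQsingle, AddMonoidAlgebra.coeff_mul_single_apply, ← hQsingle, ← sub_eq_add_neg]
    rcases SK_zero_or_one (K := K) hg (x - d) with h | h <;> rw [hx, h]
    · left; ring
    · right; ring

end R1aux


/-! Evaluation helper lemmas (definitional, stated for the `AddMonoidAlgebra` instances). -/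

namespace Eval

lemma add_apply {G : Type*} (f g : AddMonoidAlgebra ℤ G) (x : G) : (f + g) x = f x + g x := rfl
lemma sub_apply {G : Type*} (f g : AddMonoidAlgebra ℤ G) (x : G) : (f - g) x = f x - g x := rfl
lemma smul_apply {G : Type*} (c : ℤ) (f : AddMonoidAlgebra ℤ G) (x : G) :
    (c • f) x = c * f x := rfl
lemma single_apply {G : Type*} [DecidableEq G] (a x : G) (c : ℤ) :
    (single a c : AddMonoidAlgebra ℤ G) x = if a = x then c else 0 := Finsupp.single_apply

end Eval

/-! Auxiliary: the slice map `R2 → R1`, extracting the coefficient of `x^{-1}`. -/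

namespace R2aux

noncomputable def σ (f : R2) : R1 :=
  AddMonoidAlgebra.ofCoeff (Finsupp.comapDomain (fun j : ℤ => ((-1:ℤ), j)) f.coeff
    (fun _ _ _ _ h => (Prod.ext_iff.1 h).2))

lemma σ_apply (f : R2) (j : ℤ) : σ f j = f (-1, j) := rfl

lemma σ_mul (K : ℕ) (g2 : ℤ) (Q : R2) :
    σ ((∑ i ∈ range K, single ((0:ℤ), (i:ℤ) * g2) (1:ℤ)) * Q) = R1aux.SK K g2 * σ Q := by
  ext j
  have hL : σ ((∑ i ∈ range K, single ((0:ℤ), (i:ℤ) * g2) (1:ℤ)) * Q) j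
      = ∑ i ∈ range K, (single ((0:ℤ), (i:ℤ) * g2) (1:ℤ) * Q) (-1, j) := by
    rw [σ_apply, Finset.sum_mul, AddMonoidAlgebra.coeff_sum, Finsupp.finset_sum_apply]
  have hR : (R1aux.SK K g2 * σ Q) j
      = ∑ i ∈ range K, (single ((i:ℤ) * g2) (1:ℤ) * σ Q) j := by
    rw [R1aux.SK, Finset.sum_mul, AddMonoidAlgebra.coeff_sum, Finsupp.finset_sum_apply]
  rw [hL, hR]
  apply Finset.sum_congr rfl
  intro i _
  rw [AddMonoidAlgebra.coeff_single_mul_apply, AddMonoidAlgebra.coeff_single_mul_apply, one_mul, one_mul,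
    σ_apply]
  congr 1

end R2aux

/-- The generator `a` of the free group on two generators. -/
def a : FreeGroup (Fin 2) := FreeGroup.of 0

/-- The generator `b` of the free group on two generators. -/
def b : FreeGroup (Fin 2) := FreeGroup.of 1

/-- An element of the free group on two generators is a proper power if it is a `k`-th
power for some integer `k ≥ 2`. -/
def IsProperPower (g : FreeGroup (Fin 2)) : Prop :=
  ∃ (w : FreeGroup (Fin 2)) (k : ℤ), 2 ≤ k ∧ g = w ^ k

/-! The three homomorphisms used to detect the three elements. -/

noncomputable def Φ1 : FreeGroup (Fin 2) →* Multiplicative ℤ :=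
  FreeGroup.lift ![1, Multiplicative.ofAdd 1]

lemma Φ1a : Φ1 a = 1 := by simp [Φ1, a, FreeGroup.lift_apply_of]
lemma Φ1b : Φ1 b = Multiplicative.ofAdd 1 := by simp [Φ1, b, FreeGroup.lift_apply_of]

noncomputable def Φ2 : FreeGroup (Fin 2) →* W ℤ :=
  FreeGroup.lift ![⟨0, 1⟩, ⟨single 0 1, 0⟩]

lemma Φ2a : Φ2 a = ⟨0, 1⟩ := by simp [Φ2, a, FreeGroup.lift_apply_of]
lemma Φ2b : Φ2 b = ⟨single 0 1, 0⟩ := by simp [Φ2, b, FreeGroup.lift_apply_of]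

lemma Φ2c1 : Φ2 (a * b⁻¹ * a⁻¹ * b) = ⟨single 0 1 - single 1 1, 0⟩ := by
  rw [map_mul, map_mul, map_mul, map_inv, map_inv, Φ2a, Φ2b]
  simp only [W.mul_def, W.inv_def, W.mk.injEq, single_mul_single, mul_one, one_mul, mul_zero,
    zero_mul, add_zero, zero_add, neg_zero, neg_neg, mul_neg, neg_add_cancel, and_true]
  norm_num
  abel

lemma Φ2c2 : Φ2 (b * a⁻¹ * b⁻¹ * a) = ⟨single 0 1 - single (-1) 1, 0⟩ := by
  rw [map_mul, map_mul, map_mul, map_inv, map_inv, Φ2a, Φ2b]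
  simp only [W.mul_def, W.inv_def, W.mk.injEq, single_mul_single, mul_one, one_mul, mul_zero,
    zero_mul, add_zero, zero_add, neg_zero, neg_neg, mul_neg, neg_add_cancel, and_true]
  abel

lemma Φ2w2 (p q n : ℤ) :
    Φ2 ((a * b⁻¹ * a⁻¹ * b) ^ n * b ^ q * (b * a⁻¹ * b⁻¹ * a) ^ n * a ^ (p + 1)) =
      ⟨n • (single 0 1 - single 1 1) + q • single 0 1 + n • (single 0 1 - single (-1) 1),
        p + 1⟩ := by
  rw [map_mul, map_mul, map_mul, map_zpow, map_zpow, map_zpow, map_zpow, Φ2c1, Φ2c2, Φ2a, Φ2b,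
    W.p_zpow, W.p_zpow, W.p_zpow, W.g_zpow]
  simp only [W.mul_def, W.single_zero_one, one_mul, mul_zero, add_zero, zero_add, smul_eq_mul,
    mul_one]

noncomputable def Φ3 : FreeGroup (Fin 2) →* W (ℤ × ℤ) :=
  FreeGroup.lift ![⟨single 0 1, (1, 0)⟩, ⟨0, (0, 1)⟩]

lemma Φ3a : Φ3 a = ⟨single 0 1, (1, 0)⟩ := by simp [Φ3, a, FreeGroup.lift_apply_of]
lemma Φ3b : Φ3 b = ⟨0, (0, 1)⟩ := by simp [Φ3, b, FreeGroup.lift_apply_of]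

lemma Φ3C : Φ3 (a⁻¹ * b * a * b⁻¹) = ⟨single (-1, 1) 1 - single (-1, 0) 1, 0⟩ := by
  rw [map_mul, map_mul, map_mul, map_inv, map_inv, Φ3a, Φ3b]
  simp only [W.mul_def, W.inv_def, W.mk.injEq, single_mul_single, Prod.mk_add_mk, Prod.neg_mk,
    mul_one, one_mul, mul_zero, zero_mul, add_zero, zero_add, neg_zero, neg_neg, mul_neg,
    Prod.mk.injEq]
  norm_num
  abel

lemma Φ3D : Φ3 (b⁻¹ * a * b * a⁻¹) = ⟨single (0, -1) 1 - single 0 1, 0⟩ := by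
  rw [map_mul, map_mul, map_mul, map_inv, map_inv, Φ3a, Φ3b]
  simp only [W.mul_def, W.inv_def, W.mk.injEq, single_mul_single, Prod.mk_add_mk, Prod.neg_mk,
    mul_one, one_mul, mul_zero, zero_mul, add_zero, zero_add, neg_zero, neg_neg, mul_neg,
    Prod.mk.injEq]
  norm_num
  abel

lemma Φ3w3 (q n : ℤ) :
    Φ3 (b⁻¹ * (a⁻¹ * b * a * b⁻¹) ^ n * b ^ (-q) * (b⁻¹ * a * b * a⁻¹) ^ n) =
      ⟨n • (single (-1, 0) 1 - single (-1, -1) 1) +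
        n • (single (0, -q - 2) 1 - single (0, -q - 1) 1), (0, -(q + 1))⟩ := by
  rw [map_mul, map_mul, map_mul, map_inv, map_zpow, map_zpow, map_zpow, Φ3C, Φ3D, Φ3b,
    W.p_zpow, W.p_zpow, W.g_zpow]
  simp only [W.mul_def, W.inv_def, W.mk.injEq, Prod.smul_mk, smul_eq_mul, mul_zero, mul_one,
    Prod.neg_mk, neg_zero, zero_mul, zero_add, add_zero, Prod.mk_add_mk, Prod.mk.injEq,
    mul_smul_comm, single_mul_single, one_mul, smul_sub]
  rw [mul_sub, mul_sub]
  simp only [mul_smul_comm, single_mul_single, one_mul, Prod.mk_add_mk]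
  norm_num
  rw [show (-1:ℤ) + -q + -1 = -q - 2 by ring, show (-1:ℤ) + -q = -q - 1 by ring]

/-- For `p, q ≥ 2` and `n ≥ 1`, none of the elements `λμ⁻¹`, `νλ⁻¹`, `μν⁻¹` arising from the
first once-punctured torus for the knot `K_n` of Figure 3 is a proper power. -/
theorem stmt_4 (p q n : ℤ) (hp : 2 ≤ p) (hq : 2 ≤ q) (hn : 1 ≤ n) :
    ¬ IsProperPower (a ^ (-(p + 1)) * b) ∧
    ¬ IsProperPower ((a * b⁻¹ * a⁻¹ * b) ^ n * b ^ q * (b * a⁻¹ * b⁻¹ * a) ^ n * a ^ (p + 1)) ∧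
    ¬ IsProperPower (b⁻¹ * (a⁻¹ * b * a * b⁻¹) ^ n * b ^ (-q) * (b⁻¹ * a * b * a⁻¹) ^ n) := by
  refine ⟨?_, ?_, ?_⟩
  · -- first element : abelianization argument
    rintro ⟨w, k, hk, he⟩
    have h := congrArg Φ1 he
    rw [map_mul, map_zpow, map_zpow, Φ1a, Φ1b, one_zpow, one_mul] at h
    set m := Multiplicative.toAdd (Φ1 w) with hm
    have h2 : (1:ℤ) = k * m := by
      have h3 := congrArg Multiplicative.toAdd h
      simpa [toAdd_zpow, smul_eq_mul] using h3
    have hdvd : k ∣ 1 := ⟨m, h2⟩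
    have := Int.le_of_dvd one_pos hdvd
    omega
  · -- second element
    rintro ⟨w, k, hk, he⟩
    set K := k.toNat with hKdef
    have hKk : (K:ℤ) = k := Int.toNat_of_nonneg (by omega)
    have hK2 : 2 ≤ K := by omega
    have h := congrArg Φ2 he
    rw [Φ2w2 p q n, ← hKk, zpow_natCast, map_pow, W.pow_def, W.mk.injEq] at h
    obtain ⟨hPQ, hg⟩ := h
    set g := (Φ2 w).g with hgdef
    set Q := (Φ2 w).p with hQdef
    rw [nsmul_eq_mul] at hg
    have hK2' : (2:ℤ) ≤ (K:ℤ) := by exact_mod_cast hK2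
    have hgpos : 1 ≤ g := by nlinarith
    have hsum : (∑ i ∈ range K, single (i • g) (1:ℤ)) = R1aux.SK K g := by
      rw [R1aux.SK]
      exact Finset.sum_congr rfl fun i _ => by rw [nsmul_eq_mul]
    rw [hsum] at hPQ
    set P : R1 := n • (single (0:ℤ) (1:ℤ) - single 1 1) + q • single 0 1 +
      n • (single 0 1 - single (-1) 1) with hPdef
    have hPeval : ∀ x : ℤ, P x =
        if x = 0 then q + 2*n else if x = 1 then -n else if x = -1 then -n else 0 := by
      intro x
      simp only [hPdef, Eval.add_apply, Eval.sub_apply, Eval.smul_apply, Eval.single_apply]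
      split_ifs <;> omega
    have hlo : P (-1) ≠ 0 := by rw [hPeval]; split_ifs <;> omega
    have hhi : P 1 ≠ 0 := by rw [hPeval]; split_ifs <;> omega
    have hsupp : ∀ x, P x ≠ 0 → -1 ≤ x ∧ x ≤ 1 := by
      intro x hx
      rw [hPeval] at hx
      split_ifs at hx <;> omega
    obtain ⟨hle, heq⟩ := R1aux.core (by omega) (by omega : g ≠ 0) hlo hhi hsupp hPQ.symm
    rw [abs_of_pos (by omega : (0:ℤ) < g)] at hle heq
    have hlin : ((K:ℤ) - 1) * g = p + 1 - g := by rw [sub_mul, one_mul, ← hg]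
    rw [hlin] at hle heq
    have h2g : 2 * g ≤ p + 1 := by
      nlinarith [mul_nonneg (by omega : (0:ℤ) ≤ (K:ℤ) - 2) (by omega : (0:ℤ) ≤ g)]
    obtain ⟨c, hc⟩ := heq (by omega)
    have e0 := hc 0
    have e1 := hc 1
    rw [hPeval] at e0
    rw [hPeval] at e1
    norm_num at e0 e1
    omega
  · -- third element
    rintro ⟨w, k, hk, he⟩
    set K := k.toNat with hKdef
    have hKk : (K:ℤ) = k := Int.toNat_of_nonneg (by omega)
    have hK2 : 2 ≤ K := by omega
    have h := congrArg Φ3 he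
    rw [Φ3w3 q n, ← hKk, zpow_natCast, map_pow, W.pow_def, W.mk.injEq] at h
    obtain ⟨hPQ, hg⟩ := h
    set g := (Φ3 w).g with hgdef
    set Q := (Φ3 w).p with hQdef
    have hK2' : (2:ℤ) ≤ (K:ℤ) := by exact_mod_cast hK2
    have h1 : (0:ℤ) = K • g.1 := congrArg Prod.fst hg
    have h2 : -(q+1) = K • g.2 := congrArg Prod.snd hg
    rw [nsmul_eq_mul] at h1 h2
    have hg1 : g.1 = 0 := by
      rcases mul_eq_zero.1 h1.symm with h | h
      · omega
      · exact h
    have hg2 : (K:ℤ) * g.2 = -(q+1) := h2.symm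
    have hsum : (∑ i ∈ range K, single (i • g) (1:ℤ)) =
        ∑ i ∈ range K, single ((0:ℤ), (i:ℤ) * g.2) (1:ℤ) := by
      apply Finset.sum_congr rfl
      intro i _
      congr 1
      have : i • g = (i • g.1, i • g.2) := rfl
      rw [this, hg1, smul_zero, nsmul_eq_mul]
    rw [hsum] at hPQ
    have hσ := congrArg R2aux.σ hPQ.symm
    rw [R2aux.σ_mul] at hσ
    have hσP : R2aux.σ (n • (single ((-1:ℤ), (0:ℤ)) (1:ℤ) - single (-1, -1) 1) +
        n • (single (0, -q - 2) 1 - single (0, -q - 1) 1)) =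
        n • (single (0:ℤ) (1:ℤ) - single (-1:ℤ) (1:ℤ)) := by
      ext j
      rw [R2aux.σ_apply]
      simp only [Eval.add_apply, Eval.sub_apply, Eval.smul_apply, Eval.single_apply,
        Prod.mk.injEq, true_and, false_and, if_false]
      split_ifs <;>
        first
        | exact (And.left ‹False ∧ _›).elim
        | omega
        | (ring_nf; omega)
    rw [hσP] at hσ
    set P : R1 := n • (single (0:ℤ) (1:ℤ) - single (-1:ℤ) (1:ℤ)) with hPdef
    have hPeval : ∀ x : ℤ, P x = if x = 0 then n else if x = -1 then -n else 0 := by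
      intro x
      simp only [hPdef, Eval.sub_apply, Eval.smul_apply, Eval.single_apply]
      split_ifs <;> omega
    have hlo : P (-1) ≠ 0 := by rw [hPeval]; split_ifs <;> omega
    have hhi : P 0 ≠ 0 := by rw [hPeval]; split_ifs <;> omega
    have hsupp : ∀ x, P x ≠ 0 → -1 ≤ x ∧ x ≤ 0 := by
      intro x hx
      rw [hPeval] at hx
      split_ifs at hx <;> omega
    have hg2ne : g.2 ≠ 0 := by
      intro h0
      rw [h0, mul_zero] at hg2
      omega
    obtain ⟨hle, -⟩ := R1aux.core (K := K) (by omega) hg2ne hlo hhi hsupp hσ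
    have hgneg : g.2 < 0 := by
      by_contra hcon
      push_neg at hcon
      have hnn : 0 ≤ (K:ℤ) * g.2 := mul_nonneg (by omega) hcon
      omega
    rw [abs_of_neg hgneg] at hle
    have hlin : ((K:ℤ) - 1) * -g.2 = q + 1 + g.2 := by
      have he : ((K:ℤ) - 1) * -g.2 = -((K:ℤ) * g.2) + g.2 := by ring
      rw [he, hg2]
      ring
    rw [hlin] at hle
    have h2g : 2 * -g.2 ≤ q + 1 := by
      nlinarith [mul_nonneg (by omega : (0:ℤ) ≤ (K:ℤ) - 2) (by omega : (0:ℤ) ≤ -g.2)]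
    omega
end

section
/- For all integers p, q ≥ 2 and n ≥ 1, none of the following three elements of F₂ is a proper power: w₄ = a · b^{-(q+1)}; w₅ = (b⁻¹·a·b·a⁻¹)^n · a^{-p} · (a⁻¹·b·a·b⁻¹)^n · a⁻¹; w₆ = b^{q+1} · (b·a·b⁻¹·a⁻¹)^n · a^p · (b·a⁻¹·b⁻¹·a)^n. (These are the elements λμ⁻¹, νλ⁻¹ and μν⁻¹ of F₂ = π₁ of the handlebody complementary to the Seifert surface, arising from the second once-punctured torus for the knot K_n of Figure 3, where λ = a, μ = b^{q+1}, ν = (b⁻¹·a·b·a⁻¹)^n · a^{-p} · (a⁻¹·b·a·b⁻¹)^n.) -/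
open Complex Finset


/-- The affine group of `ℂ`: pairs `(c, d)` acting as `z ↦ c z + d`. -/
structure Aff : Type where
  c : ℂˣ
  d : ℂ

namespace Aff

@[ext] lemma ext' {g h : Aff} (hc : g.c = h.c) (hd : g.d = h.d) : g = h := by
  cases g; cases h; simp_all

instance : Mul Aff := ⟨fun g h => ⟨g.c * h.c, (g.c : ℂ) * h.d + g.d⟩⟩
instance : One Aff := ⟨⟨1, 0⟩⟩
instance : Inv Aff := ⟨fun g => ⟨g.c⁻¹, -(((g.c⁻¹ : ℂˣ) : ℂ) * g.d)⟩⟩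

@[simp] lemma mul_c (g h : Aff) : (g * h).c = g.c * h.c := rfl
@[simp] lemma mul_d (g h : Aff) : (g * h).d = (g.c : ℂ) * h.d + g.d := rfl
@[simp] lemma one_c : (1 : Aff).c = 1 := rfl
@[simp] lemma one_d : (1 : Aff).d = 0 := rfl
@[simp] lemma inv_c (g : Aff) : (g⁻¹).c = g.c⁻¹ := rfl
@[simp] lemma inv_d (g : Aff) : (g⁻¹).d = -(((g.c⁻¹ : ℂˣ) : ℂ) * g.d) := rfl

instance : Group Aff where
  mul := (· * ·)
  one := 1
  inv := Inv.inv
  mul_assoc x y z := by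
    ext
    · exact mul_assoc _ _ _
    · show (x.c * y.c : ℂˣ) * z.d + ((x.c : ℂ) * y.d + x.d)
        = (x.c : ℂ) * ((y.c : ℂ) * z.d + y.d) + x.d
      simp [Units.val_mul]; ring
  one_mul x := by ext <;> simp
  mul_one x := by ext <;> simp
  inv_mul_cancel x := by
    ext
    · simp
    · show ((x.c⁻¹ : ℂˣ) : ℂ) * x.d + -(((x.c⁻¹ : ℂˣ) : ℂ) * x.d) = 0
      ring

/-- The multiplier homomorphism. -/
def cHom : Aff →* ℂˣ where
  toFun := Aff.c
  map_one' := rfl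
  map_mul' _ _ := rfl

@[simp] lemma cHom_apply (g : Aff) : cHom g = g.c := rfl

lemma trans_pow (t : ℂ) (m : ℕ) : (⟨1, t⟩ : Aff) ^ m = ⟨1, m * t⟩ := by
  induction m with
  | zero => ext <;> simp
  | succ m ih =>
      rw [pow_succ, ih]
      ext <;> simp <;> push_cast <;> ring

lemma trans_zpow (t : ℂ) (m : ℤ) : (⟨1, t⟩ : Aff) ^ m = ⟨1, m * t⟩ := by
  cases m with
  | ofNat m => simpa using trans_pow t m
  | negSucc m =>
      rw [zpow_negSucc, trans_pow]
      ext <;> simp <;> push_cast <;> ring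

lemma scale_pow (u : ℂˣ) (m : ℕ) : (⟨u, 0⟩ : Aff) ^ m = ⟨u ^ m, 0⟩ := by
  induction m with
  | zero => ext <;> simp
  | succ m ih => rw [pow_succ, ih]; ext <;> simp [pow_succ]

lemma scale_zpow (u : ℂˣ) (m : ℤ) : (⟨u, 0⟩ : Aff) ^ m = ⟨u ^ m, 0⟩ := by
  cases m with
  | ofNat m => simpa using scale_pow u m
  | negSucc m => rw [zpow_negSucc, scale_pow]; ext <;> simp

lemma pow_c (g : Aff) (m : ℕ) : (g ^ m).c = g.c ^ m := by
  simpa using map_pow cHom g m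

lemma pow_d (g : Aff) (m : ℕ) :
    (g ^ m).d = g.d * ∑ i ∈ Finset.range m, (g.c : ℂ) ^ i := by
  induction m with
  | zero => simp
  | succ m ih =>
      rw [pow_succ', mul_d, ih, geom_sum_succ]
      ring

end Aff
/-- Exponent sum of the first generator. -/
def expA : FreeGroup (Fin 2) →* Multiplicative ℤ :=
  FreeGroup.lift ![Multiplicative.ofAdd 1, Multiplicative.ofAdd 0]

/-- Exponent sum of the second generator. -/
def expB : FreeGroup (Fin 2) →* Multiplicative ℤ :=
  FreeGroup.lift ![Multiplicative.ofAdd 0, Multiplicative.ofAdd 1]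

@[simp] lemma expA_a : expA a = Multiplicative.ofAdd 1 := by
  simp [expA, a, FreeGroup.lift_apply_of]

@[simp] lemma expA_b : expA b = Multiplicative.ofAdd 0 := by
  simp [expA, b, FreeGroup.lift_apply_of]

@[simp] lemma expB_a : expB a = Multiplicative.ofAdd 0 := by
  simp [expB, a, FreeGroup.lift_apply_of]

@[simp] lemma expB_b : expB b = Multiplicative.ofAdd 1 := by
  simp [expB, b, FreeGroup.lift_apply_of]

lemma cpart (A B : Aff) (w : FreeGroup (Fin 2)) :
    (FreeGroup.lift ![A, B] w).c
      = A.c ^ (expA w).toAdd * B.c ^ (expB w).toAdd := by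
  have h : Aff.cHom.comp (FreeGroup.lift ![A, B])
      = ((zpowersHom ℂˣ A.c).comp expA) * ((zpowersHom ℂˣ B.c).comp expB) := by
    apply FreeGroup.ext_hom
    intro i
    fin_cases i <;>
      simp [expA, expB, FreeGroup.lift_apply_of]
  have := DFunLike.congr_fun h w
  simpa using this
/-- For `p, q ≥ 2` and `n ≥ 1`, none of the elements `λμ⁻¹`, `νλ⁻¹`, `μν⁻¹` arising from the
second once-punctured torus for the knot `K_n` of Figure 3 is a proper power. -/
theorem stmt_5 (p q n : ℤ) (hp : 2 ≤ p) (hq : 2 ≤ q) (hn : 1 ≤ n) :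
    ¬ IsProperPower (a * b ^ (-(q + 1))) ∧
    ¬ IsProperPower ((b⁻¹ * a * b * a⁻¹) ^ n * a ^ (-p) * (a⁻¹ * b * a * b⁻¹) ^ n * a⁻¹) ∧
    ¬ IsProperPower (b ^ (q + 1) * (b * a * b⁻¹ * a⁻¹) ^ n * a ^ p * (b * a⁻¹ * b⁻¹ * a) ^ n) := by
  refine ⟨?_, ?_, ?_⟩
  -- Part 1 : `a * b ^ (-(q+1))`
  · rintro ⟨w, k, hk, hw⟩
    have h := congrArg Multiplicative.toAdd (congrArg expA hw)
    simp only [map_mul, map_zpow, expA_a, expA_b, toAdd_mul, toAdd_zpow, toAdd_ofAdd,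
      smul_eq_mul] at h
    have hdvd : k ∣ 1 := ⟨(expA w).toAdd, by linarith⟩
    have := Int.le_of_dvd one_pos hdvd
    omega
  -- Part 2
  · rintro ⟨w, k, hk, hw⟩
    set m₁ := (expA w).toAdd with hm₁
    set m₂ := (expB w).toAdd with hm₂
    have hka : k * m₁ = -(p + 1) := by
      have h := congrArg Multiplicative.toAdd (congrArg expA hw)
      simp only [map_mul, map_zpow, map_inv, expA_a, expA_b, toAdd_mul, toAdd_zpow, toAdd_inv,
        toAdd_ofAdd, smul_eq_mul] at h
      linarith
    have hkb : m₂ = 0 := by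
      have h2 := congrArg Multiplicative.toAdd (congrArg expB hw)
      simp only [map_mul, map_zpow, map_inv, expB_a, expB_b, toAdd_mul, toAdd_zpow, toAdd_inv,
        toAdd_ofAdd, smul_eq_mul] at h2
      have h3 : k * m₂ = 0 := by linarith
      rcases mul_eq_zero.mp h3 with h' | h'
      · omega
      · exact h'
    -- root of unity
    set N : ℕ := (p + 1).toNat with hNdef
    have hNc : (N : ℤ) = p + 1 := Int.toNat_of_nonneg (by linarith)
    have hN0 : N ≠ 0 := by omega
    set ξ0 : ℂ := Complex.exp (2 * Real.pi * Complex.I / N) with hξ0def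
    have hprim : IsPrimitiveRoot ξ0 N := Complex.isPrimitiveRoot_exp N hN0
    have hne1 : ξ0 ≠ 1 := hprim.ne_one (by omega)
    have hu : IsUnit ξ0 := hprim.isUnit (by omega)
    set ξ : ℂˣ := hu.unit with hξdef
    have hval : (ξ : ℂ) = ξ0 := hu.unit_spec
    have hne0 : ξ0 ≠ 0 := hu.ne_zero
    have hprimu : IsPrimitiveRoot ξ N := hprim.isUnit_unit (by omega)
    have hξN : ξ ^ (p + 1) = 1 := by
      have := hprimu.zpow_eq_one
      rwa [hNc] at this
    have hξmp : ξ ^ (-p) = ξ := by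
      calc ξ ^ (-p) = ξ ^ (-p) * ξ ^ (p + 1) := by rw [hξN, mul_one]
        _ = ξ ^ (1 : ℤ) := by rw [← zpow_add]; norm_num
        _ = ξ := zpow_one ξ
    -- the affine representation
    set A : Aff := ⟨ξ, 0⟩ with hA
    set B : Aff := ⟨-1, 1⟩ with hB
    set φ := (FreeGroup.lift ![A, B] : FreeGroup (Fin 2) →* Aff) with hφ
    have hφa : φ a = A := by rw [hφ]; simp [a, FreeGroup.lift_apply_of]
    have hφb : φ b = B := by rw [hφ]; simp [b, FreeGroup.lift_apply_of]
    have hblk1 : φ (b⁻¹ * a * b * a⁻¹) = ⟨1, 1 - ξ0⟩ := by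
      rw [map_mul, map_mul, map_mul, map_inv, map_inv, hφa, hφb]
      ext
      · simp [hA, hB]
      · simp [hA, hB, hval]
        try field_simp
        try ring
    have hblk1n : φ ((b⁻¹ * a * b * a⁻¹) ^ n) = ⟨1, n * (1 - ξ0)⟩ := by
      rw [map_zpow, hblk1, Aff.trans_zpow]
    have hblk2 : φ (a⁻¹ * b * a * b⁻¹) = ⟨1, ξ0⁻¹ - 1⟩ := by
      rw [map_mul, map_mul, map_mul, map_inv, map_inv, hφa, hφb]
      ext
      · simp [hA, hB]
      · simp [hA, hB, hval]
        try field_simp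
        try ring
    have hblk2n : φ ((a⁻¹ * b * a * b⁻¹) ^ n) = ⟨1, n * (ξ0⁻¹ - 1)⟩ := by
      rw [map_zpow, hblk2, Aff.trans_zpow]
    have hap : φ (a ^ (-p)) = ⟨ξ, 0⟩ := by
      rw [map_zpow, hφa, hA, Aff.scale_zpow, hξmp]
    have hainv : φ a⁻¹ = ⟨ξ⁻¹, 0⟩ := by
      rw [map_inv, hφa]
      ext <;> simp [hA]
    have htot : φ ((b⁻¹ * a * b * a⁻¹) ^ n * a ^ (-p) * (a⁻¹ * b * a * b⁻¹) ^ n * a⁻¹)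
        = ⟨1, 2 * n * (1 - ξ0)⟩ := by
      rw [map_mul, map_mul, map_mul, hblk1n, hap, hblk2n, hainv]
      ext
      · simp
      · simp [hval]
        field_simp
        ring
    -- the multiplier of `φ w`
    have hμ : (φ w).c = ξ ^ m₁ := by
      have hc := cpart A B w
      rw [← hφ] at hc
      rw [hc, ← hm₁, ← hm₂, hkb]
      simp [hA, hB]
    have hμne : ((ξ ^ m₁ : ℂˣ) : ℂ) ≠ 1 := by
      intro hone
      have h1 : (ξ ^ m₁ : ℂˣ) = 1 := Units.ext (by simpa using hone)
      rw [hprimu.zpow_eq_one_iff_dvd] at h1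
      rcases h1 with ⟨t, ht⟩
      have h2 : k * t = -1 := by
        have h3 : (p + 1) * (k * t) = (p + 1) * (-1) := by
          rw [ht, hNc] at hka
          linarith [hka]
        exact mul_left_cancel₀ (by omega : (p : ℤ) + 1 ≠ 0) h3
      have hdvd : k ∣ 1 := (dvd_neg).mp ⟨t, h2.symm⟩
      have := Int.le_of_dvd one_pos hdvd
      omega
    set K : ℕ := k.toNat with hKdef
    have hKk : (K : ℤ) = k := Int.toNat_of_nonneg (by omega)
    have hμK : ((ξ ^ m₁ : ℂˣ) ^ K : ℂˣ) = 1 := by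
      rw [← zpow_natCast, ← zpow_mul, hKk, mul_comm, hka, zpow_neg, hξN, inv_one]
    have hsum : ∑ i ∈ Finset.range K, ((ξ ^ m₁ : ℂˣ) : ℂ) ^ i = 0 := by
      rw [geom_sum_eq hμne K]
      have : ((ξ ^ m₁ : ℂˣ) : ℂ) ^ K = 1 := by
        rw [← Units.val_pow_eq_pow_val, hμK, Units.val_one]
      rw [this, sub_self, zero_div]
    have hfinal : φ ((b⁻¹ * a * b * a⁻¹) ^ n * a ^ (-p) * (a⁻¹ * b * a * b⁻¹) ^ n * a⁻¹)
        = (φ w) ^ k := by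
      rw [hw, map_zpow]
    rw [htot] at hfinal
    have hd := congrArg Aff.d hfinal
    rw [← hKk, zpow_natCast, Aff.pow_d, hμ, hsum, mul_zero] at hd
    simp only at hd
    have hn0 : (n : ℂ) ≠ 0 := Int.cast_ne_zero.mpr (by omega)
    have : (2 : ℂ) * n * (1 - ξ0) = 0 := hd
    have := mul_eq_zero.mp this
    rcases this with h' | h'
    · rcases mul_eq_zero.mp h' with h'' | h''
      · norm_num at h''
      · exact hn0 h''
    · exact hne1 (by linear_combination -h')
  -- Part 3
  · rintro ⟨w, k, hk, hw⟩
    set m₁ := (expA w).toAdd with hm₁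
    set m₂ := (expB w).toAdd with hm₂
    have hka : k * m₁ = p := by
      have h := congrArg Multiplicative.toAdd (congrArg expA hw)
      simp only [map_mul, map_zpow, map_inv, expA_a, expA_b, toAdd_mul, toAdd_zpow, toAdd_inv,
        toAdd_ofAdd, smul_eq_mul] at h
      linarith
    have hkb : k * m₂ = q + 1 := by
      have h2 := congrArg Multiplicative.toAdd (congrArg expB hw)
      simp only [map_mul, map_zpow, map_inv, expB_a, expB_b, toAdd_mul, toAdd_zpow, toAdd_inv,
        toAdd_ofAdd, smul_eq_mul] at h2
      linarith
    set N : ℕ := (q + 1).toNat with hNdef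
    have hNc : (N : ℤ) = q + 1 := Int.toNat_of_nonneg (by linarith)
    have hN0 : N ≠ 0 := by omega
    set η0 : ℂ := Complex.exp (2 * Real.pi * Complex.I / N) with hη0def
    have hprim : IsPrimitiveRoot η0 N := Complex.isPrimitiveRoot_exp N hN0
    have hne1 : η0 ≠ 1 := hprim.ne_one (by omega)
    have hu : IsUnit η0 := hprim.isUnit (by omega)
    set η : ℂˣ := hu.unit with hηdef
    have hval : (η : ℂ) = η0 := hu.unit_spec
    have hne0 : η0 ≠ 0 := hu.ne_zero
    have hprimu : IsPrimitiveRoot η N := hprim.isUnit_unit (by omega)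
    have hηN : η ^ (q + 1) = 1 := by
      have := hprimu.zpow_eq_one
      rwa [hNc] at this
    set A : Aff := ⟨1, 1⟩ with hA
    set B : Aff := ⟨η, 0⟩ with hB
    set φ := (FreeGroup.lift ![A, B] : FreeGroup (Fin 2) →* Aff) with hφ
    have hφa : φ a = A := by rw [hφ]; simp [a, FreeGroup.lift_apply_of]
    have hφb : φ b = B := by rw [hφ]; simp [b, FreeGroup.lift_apply_of]
    have hbq : φ (b ^ (q + 1)) = 1 := by
      rw [map_zpow, hφb, hB, Aff.scale_zpow, hηN]
      ext <;> simp
    have hblk1 : φ (b * a * b⁻¹ * a⁻¹) = ⟨1, η0 - 1⟩ := by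
      rw [map_mul, map_mul, map_mul, map_inv, map_inv, hφa, hφb]
      ext
      · simp [hA, hB]
      · simp [hA, hB, hval]
        try field_simp
        try ring
    have hblk1n : φ ((b * a * b⁻¹ * a⁻¹) ^ n) = ⟨1, n * (η0 - 1)⟩ := by
      rw [map_zpow, hblk1, Aff.trans_zpow]
    have hblk2 : φ (b * a⁻¹ * b⁻¹ * a) = ⟨1, 1 - η0⟩ := by
      rw [map_mul, map_mul, map_mul, map_inv, map_inv, hφa, hφb]
      ext
      · simp [hA, hB]
      · simp [hA, hB, hval]
        try field_simp
        try ring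
    have hblk2n : φ ((b * a⁻¹ * b⁻¹ * a) ^ n) = ⟨1, n * (1 - η0)⟩ := by
      rw [map_zpow, hblk2, Aff.trans_zpow]
    have hap : φ (a ^ p) = ⟨1, p⟩ := by
      rw [map_zpow, hφa, hA, Aff.trans_zpow, mul_one]
    have htot : φ (b ^ (q + 1) * (b * a * b⁻¹ * a⁻¹) ^ n * a ^ p * (b * a⁻¹ * b⁻¹ * a) ^ n)
        = ⟨1, (p : ℂ)⟩ := by
      rw [map_mul, map_mul, map_mul, hbq, hblk1n, hap, hblk2n]
      ext
      · simp
      · simp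
        ring
    have hμ : (φ w).c = η ^ m₂ := by
      have hc := cpart A B w
      rw [← hφ] at hc
      rw [hc, ← hm₁, ← hm₂]
      simp [hA, hB]
    have hμne : ((η ^ m₂ : ℂˣ) : ℂ) ≠ 1 := by
      intro hone
      have h1 : (η ^ m₂ : ℂˣ) = 1 := Units.ext (by simpa using hone)
      rw [hprimu.zpow_eq_one_iff_dvd] at h1
      rcases h1 with ⟨t, ht⟩
      have h2 : k * t = 1 := by
        have h3 : (q + 1) * (k * t) = (q + 1) * 1 := by
          rw [ht, hNc] at hkb
          linarith [hkb]
        exact mul_left_cancel₀ (by omega : (q : ℤ) + 1 ≠ 0) h3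
      have hdvd : k ∣ 1 := ⟨t, h2.symm⟩
      have := Int.le_of_dvd one_pos hdvd
      omega
    set K : ℕ := k.toNat with hKdef
    have hKk : (K : ℤ) = k := Int.toNat_of_nonneg (by omega)
    have hμK : ((η ^ m₂ : ℂˣ) ^ K : ℂˣ) = 1 := by
      rw [← zpow_natCast, ← zpow_mul, hKk, mul_comm, hkb, hηN]
    have hsum : ∑ i ∈ Finset.range K, ((η ^ m₂ : ℂˣ) : ℂ) ^ i = 0 := by
      rw [geom_sum_eq hμne K]
      have : ((η ^ m₂ : ℂˣ) : ℂ) ^ K = 1 := by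
        rw [← Units.val_pow_eq_pow_val, hμK, Units.val_one]
      rw [this, sub_self, zero_div]
    have hfinal : φ (b ^ (q + 1) * (b * a * b⁻¹ * a⁻¹) ^ n * a ^ p * (b * a⁻¹ * b⁻¹ * a) ^ n)
        = (φ w) ^ k := by
      rw [hw, map_zpow]
    rw [htot] at hfinal
    have hd := congrArg Aff.d hfinal
    rw [← hKk, zpow_natCast, Aff.pow_d, hμ, hsum, mul_zero] at hd
    simp only at hd
    have : (p : ℂ) = 0 := hd
    have := Int.cast_eq_zero.mp this
    omega
end

section
/- For all integers p, q, n ≥ 1, the element r'_{p,q,n} = a^{-(p+1)} · (b⁻¹·a·b·a⁻¹)^n · (b·a·b⁻¹·a⁻¹)^n · (b·a⁻¹·b⁻¹·a)^n · b^{q+1} · (a·b⁻¹·a⁻¹·b)^n · a^{p+1} · (b·a⁻¹·b⁻¹·a)^n · (b⁻¹·a⁻¹·b·a)^n · (b⁻¹·a·b·a⁻¹)^n · b^{-(q+1)} · (a⁻¹·b·a·b⁻¹)^n of F₂ is already in normal form: its reduced word (FreeGroup.toWord) is exactly the list of letters obtained by spelling out this expression letter by letter, and r'_{p,q,n} is cyclically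 reduced (the last letter of this list is not the inverse of the first). -/
/-- The word spelled out by the knot `K_n` of Figure 6(a). -/
def r' (p q n : ℤ) : FreeGroup (Fin 2) :=
  a ^ (-(p + 1)) * (b⁻¹ * a * b * a⁻¹) ^ n * (b * a * b⁻¹ * a⁻¹) ^ n *
    (b * a⁻¹ * b⁻¹ * a) ^ n * b ^ (q + 1) * (a * b⁻¹ * a⁻¹ * b) ^ n * a ^ (p + 1) *
    (b * a⁻¹ * b⁻¹ * a) ^ n * (b⁻¹ * a⁻¹ * b * a) ^ n * (b⁻¹ * a * b * a⁻¹) ^ n *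
    b ^ (-(q + 1)) * (a⁻¹ * b * a * b⁻¹) ^ n

/-- The letter-by-letter spelling of `r' p q n`, where a letter `(x, s)` denotes `x` if
`s = true` and `x⁻¹` if `s = false`. -/
def r'Word (p q n : ℤ) : List (Fin 2 × Bool) :=
  List.replicate (p + 1).toNat ((0 : Fin 2), false) ++
  (List.replicate n.toNat [((1 : Fin 2), false), (0, true), (1, true), (0, false)]).flatten ++
  (List.replicate n.toNat [((1 : Fin 2), true), (0, true), (1, false), (0, false)]).flatten ++
  (List.replicate n.toNat [((1 : Fin 2), true), (0, false), (1, false), (0, true)]).flatten ++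
  List.replicate (q + 1).toNat ((1 : Fin 2), true) ++
  (List.replicate n.toNat [((0 : Fin 2), true), (1, false), (0, false), (1, true)]).flatten ++
  List.replicate (p + 1).toNat ((0 : Fin 2), true) ++
  (List.replicate n.toNat [((1 : Fin 2), true), (0, false), (1, false), (0, true)]).flatten ++
  (List.replicate n.toNat [((1 : Fin 2), false), (0, false), (1, true), (0, true)]).flatten ++
  (List.replicate n.toNat [((1 : Fin 2), false), (0, true), (1, true), (0, false)]).flatten ++
  List.replicate (q + 1).toNat ((1 : Fin 2), false) ++
  (List.replicate n.toNat [((0 : Fin 2), false), (1, true), (0, true), (1, false)]).flatten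

namespace Stmt7Aux

/-- The "no cancellation" relation. -/
abbrev R {α : Type*} (x y : α × Bool) : Prop := ¬(x.1 = y.1 ∧ x.2 = !y.2)

lemma reduce_eq_self_of_chain' {α : Type*} [DecidableEq α] (L : List (α × Bool))
    (h : L.Chain' R) : FreeGroup.reduce L = L := by
  induction L with
  | nil => rfl
  | cons x L ih =>
    rw [FreeGroup.reduce.cons, ih h.tail]
    cases L with
    | nil => rfl
    | cons y tl =>
      simp only []
      rw [if_neg (List.isChain_cons_cons.mp h).1]

/-- Data for a nonempty chain'-block: chain, head, last. -/
lemma step {α : Type*} {Rr : α → α → Prop} {P B : List α} {u x y z : α}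
    (hP : List.Chain' Rr P) (hPh : P.head? = some u) (hPl : P.getLast? = some x)
    (hB : List.Chain' Rr B) (hBh : B.head? = some y) (hBl : B.getLast? = some z)
    (hxy : Rr x y) :
    List.Chain' Rr (P ++ B) ∧ (P ++ B).head? = some u ∧ (P ++ B).getLast? = some z := by
  have hPne : P ≠ [] := by rintro rfl; simp at hPh
  have hBne : B ≠ [] := by rintro rfl; simp at hBh
  refine ⟨List.IsChain.append hP hB ?_, ?_, ?_⟩
  · intro x' hx' y' hy'
    rw [hPl] at hx'; rw [hBh] at hy'
    obtain rfl : x' = x := by simpa using hx'.symm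
    obtain rfl : y' = y := by simpa using hy'.symm
    exact hxy
  · rw [List.head?_append_of_ne_nil _ hPne, hPh]
  · rw [List.getLast?_append_of_ne_nil _ hBne, hBl]

lemma replicate_facts {α : Type*} {Rr : α → α → Prop} (m : ℕ) (hm : m ≠ 0) (x : α)
    (hx : Rr x x) :
    List.Chain' Rr (List.replicate m x) ∧ (List.replicate m x).head? = some x ∧
      (List.replicate m x).getLast? = some x := by
  obtain ⟨m', rfl⟩ := Nat.exists_eq_succ_of_ne_zero hm
  refine ⟨List.isChain_replicate_of_rel _ hx, rfl, ?_⟩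
  clear hm
  induction m' with
  | zero => rfl
  | succ k ih =>
    rw [List.replicate_succ, List.getLast?_cons, ih]
    simp

lemma flatten_head {α : Type*} (m : ℕ) (hm : m ≠ 0) (w : List α) (hw : w ≠ []) :
    ((List.replicate m w).flatten).head? = w.head? := by
  obtain ⟨m', rfl⟩ := Nat.exists_eq_succ_of_ne_zero hm
  rw [List.replicate_succ, List.flatten_cons, List.head?_append_of_ne_nil _ hw]

lemma flatten_last {α : Type*} (m : ℕ) (hm : m ≠ 0) (w : List α) (hw : w ≠ []) :
    ((List.replicate m w).flatten).getLast? = w.getLast? := by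
  induction m with
  | zero => exact absurd rfl hm
  | succ k ih =>
    rw [List.replicate_succ, List.flatten_cons]
    rcases Nat.eq_zero_or_pos k with rfl | hk
    · simp
    · have hne : (List.replicate k w).flatten ≠ [] := by
        intro h
        have := flatten_head k (Nat.pos_iff_ne_zero.mp hk) w hw
        rw [h] at this
        simp [List.head?_eq_none_iff.mpr rfl] at this
        exact hw (by simpa using this.symm)
      rw [List.getLast?_append_of_ne_nil _ hne, ih (Nat.pos_iff_ne_zero.mp hk)]

lemma flatten_chain {α : Type*} {Rr : α → α → Prop} (m : ℕ) (w : List α) (hw : w ≠ [])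
    (h : List.Chain' Rr (w ++ w)) :
    List.Chain' Rr ((List.replicate m w).flatten) := by
  induction m with
  | zero => exact List.IsChain.nil
  | succ k ih =>
    rw [List.replicate_succ, List.flatten_cons]
    refine List.IsChain.append h.left_of_append ih ?_
    intro x hx y hy
    rcases Nat.eq_zero_or_pos k with rfl | hk
    · simp at hy
    · rw [flatten_head k (Nat.pos_iff_ne_zero.mp hk) w hw] at hy
      exact (List.isChain_append.mp h).2.2 x hx y hy

lemma flatten_facts {α : Type*} {Rr : α → α → Prop} (m : ℕ) (hm : m ≠ 0) (w : List α)
    (hw : w ≠ []) (h : List.Chain' Rr (w ++ w)) {u z : α} (hu : w.head? = some u)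
    (hz : w.getLast? = some z) :
    List.Chain' Rr ((List.replicate m w).flatten) ∧
      ((List.replicate m w).flatten).head? = some u ∧
      ((List.replicate m w).flatten).getLast? = some z := by
  refine ⟨flatten_chain m w hw h, ?_, ?_⟩
  · rw [flatten_head m hm w hw, hu]
  · rw [flatten_last m hm w hw, hz]

end Stmt7Aux

open Stmt7Aux in
/-- For all `p, q, n ≥ 1`, the element `r' p q n` is in normal form: its reduced word is its
letter-by-letter spelling, and it is cyclically reduced. -/
theorem stmt_7 (p q n : ℤ) (hp : 1 ≤ p) (hq : 1 ≤ q) (hn : 1 ≤ n) :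
    FreeGroup.toWord (r' p q n) = r'Word p q n ∧ CyclicallyReduced (r' p q n) := by
  have hP : (p + 1).toNat ≠ 0 := by omega
  have hQ : (q + 1).toNat ≠ 0 := by omega
  have hN : n.toNat ≠ 0 := by omega
  -- Step 1: r' = mk r'Word
  have key : r' p q n = FreeGroup.mk (r'Word p q n) := by
    have hflat : ∀ (k : ℕ) (x : Fin 2 × Bool),
        (List.replicate k [x]).flatten = List.replicate k x := by
      intro k x
      induction k with
      | zero => rfl
      | succ m ih => simp [List.replicate_succ, ih]
    have hz1 : ∀ (g : FreeGroup (Fin 2)) (x : Fin 2 × Bool), g = FreeGroup.mk [x] →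
        ∀ (k : ℤ), 0 ≤ k → g ^ k = FreeGroup.mk (List.replicate k.toNat x) := by
      intro g x hg k hk
      obtain ⟨m, rfl⟩ := Int.eq_ofNat_of_zero_le hk
      rw [zpow_natCast, hg, FreeGroup.pow_mk, hflat]
      simp
    have hz1n : ∀ (g : FreeGroup (Fin 2)) (x : Fin 2 × Bool), g = FreeGroup.mk [x] →
        ∀ (k : ℤ), 0 ≤ k → g ^ (-k) = FreeGroup.mk (List.replicate k.toNat (x.1, !x.2)) := by
      intro g x hg k hk
      obtain ⟨m, rfl⟩ := Int.eq_ofNat_of_zero_le hk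
      rw [zpow_neg, zpow_natCast, hg, FreeGroup.pow_mk, hflat, FreeGroup.inv_mk]
      simp [FreeGroup.invRev]
    have hzn : ∀ (g : FreeGroup (Fin 2)) (w : List (Fin 2 × Bool)), g = FreeGroup.mk w →
        g ^ n = FreeGroup.mk (List.replicate n.toNat w).flatten := by
      intro g w hg
      obtain ⟨m, hm⟩ := Int.eq_ofNat_of_zero_le (by omega : (0:ℤ) ≤ n)
      rw [hm, zpow_natCast, hg, FreeGroup.pow_mk]
      simp [hm]
    have E1 := hz1n a ((0 : Fin 2), true) rfl (p + 1) (by omega)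
    have E5 := hz1 b ((1 : Fin 2), true) rfl (q + 1) (by omega)
    have E7 := hz1 a ((0 : Fin 2), true) rfl (p + 1) (by omega)
    have E11 := hz1n b ((1 : Fin 2), true) rfl (q + 1) (by omega)
    have E2 := hzn (b⁻¹ * a * b * a⁻¹) [((1:Fin 2),false),(0,true),(1,true),(0,false)] rfl
    have E3 := hzn (b * a * b⁻¹ * a⁻¹) [((1:Fin 2),true),(0,true),(1,false),(0,false)] rfl
    have E4 := hzn (b * a⁻¹ * b⁻¹ * a) [((1:Fin 2),true),(0,false),(1,false),(0,true)] rfl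
    have E6 := hzn (a * b⁻¹ * a⁻¹ * b) [((0:Fin 2),true),(1,false),(0,false),(1,true)] rfl
    have E9 := hzn (b⁻¹ * a⁻¹ * b * a) [((1:Fin 2),false),(0,false),(1,true),(0,true)] rfl
    have E12 := hzn (a⁻¹ * b * a * b⁻¹) [((0:Fin 2),false),(1,true),(0,true),(1,false)] rfl
    rw [r', E1, E2, E3, E4, E5, E6, E7, E9, E11, E12]
    simp only [FreeGroup.mul_mk]
    rfl
  -- Step 2: the word is reduced (Chain' R)
  have hchain : List.Chain' R (r'Word p q n) ∧
      (r'Word p q n).head? = some ((0 : Fin 2), false) ∧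
      (r'Word p q n).getLast? = some ((1 : Fin 2), false) := by
    have f1 := replicate_facts (Rr := R) _ hP ((0 : Fin 2), false) (by decide)
    have f2 := flatten_facts (Rr := R) _ hN [((1 : Fin 2), false), (0, true), (1, true), (0, false)]
      (by decide) (by simp [List.Chain', List.isChain_cons_cons]) rfl rfl
    have f3 := flatten_facts (Rr := R) _ hN [((1 : Fin 2), true), (0, true), (1, false), (0, false)]
      (by decide) (by simp [List.Chain', List.isChain_cons_cons]) rfl rfl
    have f4 := flatten_facts (Rr := R) _ hN [((1 : Fin 2), true), (0, false), (1, false), (0, true)]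
      (by decide) (by simp [List.Chain', List.isChain_cons_cons]) rfl rfl
    have f5 := replicate_facts (Rr := R) _ hQ ((1 : Fin 2), true) (by decide)
    have f6 := flatten_facts (Rr := R) _ hN [((0 : Fin 2), true), (1, false), (0, false), (1, true)]
      (by decide) (by simp [List.Chain', List.isChain_cons_cons]) rfl rfl
    have f7 := replicate_facts (Rr := R) _ hP ((0 : Fin 2), true) (by decide)
    have f8 := f4
    have f9 := flatten_facts (Rr := R) _ hN [((1 : Fin 2), false), (0, false), (1, true), (0, true)]
      (by decide) (by simp [List.Chain', List.isChain_cons_cons]) rfl rfl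
    have f10 := f2
    have f11 := replicate_facts (Rr := R) _ hQ ((1 : Fin 2), false) (by decide)
    have f12 := flatten_facts (Rr := R) _ hN [((0 : Fin 2), false), (1, true), (0, true), (1, false)]
      (by decide) (by simp [List.Chain', List.isChain_cons_cons]) rfl rfl
    rw [r'Word]
    have s2 := step f1.1 f1.2.1 f1.2.2 f2.1 f2.2.1 f2.2.2 (by decide)
    have s3 := step s2.1 s2.2.1 s2.2.2 f3.1 f3.2.1 f3.2.2 (by decide)
    have s4 := step s3.1 s3.2.1 s3.2.2 f4.1 f4.2.1 f4.2.2 (by decide)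
    have s5 := step s4.1 s4.2.1 s4.2.2 f5.1 f5.2.1 f5.2.2 (by decide)
    have s6 := step s5.1 s5.2.1 s5.2.2 f6.1 f6.2.1 f6.2.2 (by decide)
    have s7 := step s6.1 s6.2.1 s6.2.2 f7.1 f7.2.1 f7.2.2 (by decide)
    have s8 := step s7.1 s7.2.1 s7.2.2 f8.1 f8.2.1 f8.2.2 (by decide)
    have s9 := step s8.1 s8.2.1 s8.2.2 f9.1 f9.2.1 f9.2.2 (by decide)
    have s10 := step s9.1 s9.2.1 s9.2.2 f10.1 f10.2.1 f10.2.2 (by decide)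
    have s11 := step s10.1 s10.2.1 s10.2.2 f11.1 f11.2.1 f11.2.2 (by decide)
    exact step s11.1 s11.2.1 s11.2.2 f12.1 f12.2.1 f12.2.2 (by decide)
  have hword : FreeGroup.toWord (r' p q n) = r'Word p q n := by
    rw [key, FreeGroup.toWord_mk, reduce_eq_self_of_chain' _ hchain.1]
  refine ⟨hword, ?_⟩
  intro x hx y hy
  rw [hword] at hx hy
  rw [hchain.2.1] at hx
  rw [hchain.2.2] at hy
  obtain rfl : x = ((0 : Fin 2), false) := by simpa using hx.symm
  obtain rfl : y = ((1 : Fin 2), false) := by simpa using hy.symm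
  decide
end

section
/- Let p, q ≥ 2 be integers and let g ∈ F₂ be an element whose reduced word L is nonempty and satisfies: for every index i, the generator of the letter L_i is different from the generator of the letter L_{(i+1) mod |L|} (so in particular no cyclic conjugate of the word of g, or of any power of g, contains an occurrence of a², a⁻², b², or b⁻²). Then for every integer v ≥ 1 and every h ∈ F₂, the conjugate h·g^v·h⁻¹ does not lie in H₀ and does not lie in H₁. -/
set_option linter.unusedSectionVars false
open FreeGroup List
variable {α : Type*} [DecidableEq α]

def adjc : List (α × Bool) → ℕ
  | [] => 0
  | [_] => 0
  | x :: y :: t => (if x.1 = y.1 then 1 else 0) + adjc (y :: t)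

@[simp] lemma adjc_nil : adjc ([] : List (α × Bool)) = 0 := rfl
@[simp] lemma adjc_singleton (x : α × Bool) : adjc [x] = 0 := rfl
@[simp] lemma adjc_cons_cons (x y : α × Bool) (t : List (α × Bool)) :
    adjc (x :: y :: t) = (if x.1 = y.1 then 1 else 0) + adjc (y :: t) := rfl

lemma adjc_cons_le (y : α × Bool) (t : List (α × Bool)) :
    adjc t ≤ adjc (y :: t) := by
  cases t with
  | nil => simp
  | cons z t => simp only [adjc_cons_cons]; omega

lemma adjc_split (xs : List (α × Bool)) (y : α × Bool) (ys : List (α × Bool)) :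
    adjc (xs ++ y :: ys) = adjc (xs ++ [y]) + adjc (y :: ys) := by
  induction xs with
  | nil => simp
  | cons x xs ih =>
    cases xs with
    | nil => simp [adjc]
    | cons x' xs' => simp only [List.cons_append, adjc_cons_cons] at *; omega

lemma adjc_append_single_le (xs : List (α × Bool)) (y : α × Bool) :
    adjc (xs ++ [y]) ≤ adjc xs + 1 ∧ adjc xs ≤ adjc (xs ++ [y]) := by
  induction xs with
  | nil => simp
  | cons x xs ih =>
    cases xs with
    | nil => simp [adjc]; split <;> simp
    | cons x' xs' => simp only [List.cons_append, adjc_cons_cons] at *; omega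

lemma adjc_append_le (xs ys : List (α × Bool)) :
    adjc (xs ++ ys) ≤ adjc xs + adjc ys + 1 := by
  cases ys with
  | nil => simp
  | cons y ys => rw [adjc_split]; have := (adjc_append_single_le xs y).1; omega



lemma adjc_append_ge (xs ys : List (α × Bool)) : adjc xs + adjc ys ≤ adjc (xs ++ ys) := by
  cases ys with
  | nil => simp
  | cons y ys =>
    rw [adjc_split]
    have := (adjc_append_single_le xs y).2
    omega

lemma adjc_replicate (n : ℕ) (z : α × Bool) : adjc (List.replicate n z) = n - 1 := by
  induction n with
  | zero => simp
  | succ m ih =>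
    cases m with
    | zero => simp
    | succ m' =>
      rw [List.replicate_succ, List.replicate_succ, adjc_cons_cons, if_pos rfl,
        ← List.replicate_succ, ih]
      omega

lemma adjc_replicate_append (n : ℕ) (hn : 1 ≤ n) (z y : α × Bool) (ys : List (α × Bool)) :
    adjc (List.replicate n z ++ y :: ys) =
      (n - 1) + (if z.1 = y.1 then 1 else 0) + adjc (y :: ys) := by
  induction n with
  | zero => omega
  | succ m ih =>
    cases m with
    | zero => simp
    | succ m' =>
      rw [show List.replicate (m'+1+1) z ++ y :: ys
          = z :: z :: (List.replicate m' z ++ y :: ys) from by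
            simp [List.replicate_succ]]
      rw [adjc_cons_cons, if_pos rfl]
      rw [show (z :: (List.replicate m' z ++ y :: ys) : List (α × Bool))
          = List.replicate (m'+1) z ++ y :: ys from by simp [List.replicate_succ]]
      rw [ih (by omega)]
      omega

lemma phi_step {L₁ L₂ : List (α × Bool)} (h : Red.Step L₁ L₂) :
    2 * adjc L₂ + L₂.length ≤ 2 * adjc L₁ + L₁.length := by
  have hlen := h.length
  cases h with
  | @not M N x b =>
    have h2 : adjc (M ++ N) ≤ adjc (M ++ (x,b) :: (x,!b) :: N) + 1 := by
      cases N with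
      | nil =>
        have := (adjc_append_single_le M (x,b)).2
        have h3 : adjc (M ++ [(x,b)]) ≤ adjc (M ++ [(x,b)] ++ [(x,!b)]) :=
          (adjc_append_single_le (M ++ [(x,b)]) (x,!b)).2
        have he : M ++ [(x,b),(x,!b)] = (M ++ [(x,b)]) ++ [(x,!b)] := by simp
        rw [List.append_nil, he]
        omega
      | cons e N' =>
        rw [adjc_split M e N']
        rw [adjc_split M (x,b) ((x,!b) :: e :: N')]
        have h4 : adjc ((x,b) :: (x,!b) :: e :: N') ≥ adjc (e :: N') := by
          have := adjc_cons_le (x,!b) (e :: N')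
          have := adjc_cons_le (x,b) ((x,!b) :: e :: N')
          omega
        have h5 := (adjc_append_single_le M e).1
        have h6 := (adjc_append_single_le M (x,b)).2
        omega
    omega

lemma phi_red {L₁ L₂ : List (α × Bool)} (h : Red L₁ L₂) :
    2 * adjc L₂ + L₂.length ≤ 2 * adjc L₁ + L₁.length := by
  induction h with
  | refl => exact le_refl _
  | tail _ hstep ih => exact le_trans (phi_step hstep) ih

lemma phi_reduce (L : List (α × Bool)) :
    2 * adjc (reduce L) + (reduce L).length ≤ 2 * adjc L + L.length :=
  phi_red (reduce.red)


/-- non-cancelling adjacent pair -/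
def NC (d e : α × Bool) : Prop := ¬(d.1 = e.1 ∧ d.2 = !e.2)

instance : DecidableRel (NC (α := α)) := fun _ _ => by unfold NC; infer_instance

lemma reduce_eq_self_of_chain'_s14 {L : List (α × Bool)} (h : List.Chain' NC L) :
    reduce L = L := by
  induction L with
  | nil => rfl
  | cons x L ih =>
    have ht : reduce L = L := ih h.tail
    rw [reduce.cons, ht]
    cases L with
    | nil => rfl
    | cons y t =>
      have hxy : NC x y := List.isChain_cons_cons.mp h |>.1
      simp only []
      rw [if_neg hxy]

lemma chain'_reduce_s14 (L : List (α × Bool)) : List.Chain' NC (reduce L) := by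
  induction L with
  | nil => simp [List.Chain']
  | cons x L ih =>
    rw [reduce.cons]
    cases hr : reduce L with
    | nil => simp [List.Chain']
    | cons y t =>
      rw [hr] at ih
      by_cases hc : x.1 = y.1 ∧ x.2 = !y.2
      · simp only [if_pos hc]
        exact ih.tail
      · simp only [if_neg hc]
        exact List.isChain_cons_cons.mpr ⟨hc, ih⟩

lemma chain'_toWord_s14 (w : FreeGroup α) : List.Chain' NC w.toWord := by
  have := chain'_reduce_s14 w.toWord
  rwa [reduce_toWord] at this

lemma reduce_cancel_boundary {M N : List (α × Bool)} {x : α} {b : Bool}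
    (h : List.Chain' NC (M ++ N)) :
    reduce (M ++ (x, b) :: (x, !b) :: N) = M ++ N := by
  rw [reduce.Step.eq (Red.Step.not), reduce_eq_self_of_chain'_s14 h]



section Piece
variable (i j : α) (P Q : ℕ)

def piece : Bool × Bool → List (α × Bool)
  | (false, true) => List.replicate P (i, true)
  | (false, false) => List.replicate P (i, false)
  | (true, true) => List.replicate Q (j, true) ++ [(i, false)]
  | (true, false) => (i, true) :: List.replicate Q (j, false)

def cancels : Bool × Bool → Bool × Bool → Bool
  | (true, true), (false, true) => true
  | (false, false), (true, false) => true
  | _, _ => false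

def W_s14 : List (Bool × Bool) → List (α × Bool)
  | [] => []
  | [c] => piece i j P Q c
  | c :: c' :: cs =>
    if cancels c c' then (piece i j P Q c).dropLast ++ (W_s14 (c' :: cs)).tail
    else piece i j P Q c ++ W_s14 (c' :: cs)

def prodW (M : List (Bool × Bool)) : FreeGroup α := (M.map (fun c => mk (piece i j P Q c))).prod

end Piece

section Main
variable {i j : α} (hij : i ≠ j) {P Q : ℕ} (hP : 3 ≤ P) (hQ : 3 ≤ Q)

omit [DecidableEq α] in
include hP hQ in
lemma piece_len_ge (c : Bool × Bool) : 3 ≤ (piece i j P Q c).length := by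
  obtain ⟨cb, cs⟩ := c
  cases cb <;> cases cs <;> simp [piece] <;> omega

omit [DecidableEq α] in
lemma NC_refl (z : α × Bool) : NC z z := by simp [NC]

omit [DecidableEq α] in
include hij in
lemma NC_of_ne {s t : Bool} : NC (i, s) (j, t) := by simp [NC, hij]

omit [DecidableEq α] in
include hij in
lemma NC_of_ne' {s t : Bool} : NC (j, s) (i, t) := by simp [NC, Ne.symm hij]

omit [DecidableEq α] in
include hP in
lemma piece_take2_xp : (piece i j P Q (false, true)).take 2 = [(i,true),(i,true)] := by
  rw [piece, List.take_replicate]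
  rw [min_eq_left (by omega)]
  rfl

omit [DecidableEq α] in
include hP in
lemma piece_take2_xm : (piece i j P Q (false, false)).take 2 = [(i,false),(i,false)] := by
  rw [piece, List.take_replicate, min_eq_left (by omega)]; rfl

omit [DecidableEq α] in
include hQ in
lemma piece_take2_yp : (piece i j P Q (true, true)).take 2 = [(j,true),(j,true)] := by
  rw [piece, List.take_append_of_le_length (by simp; omega), List.take_replicate,
    min_eq_left (by omega)]
  rfl

omit [DecidableEq α] in
include hQ in
lemma piece_take2_ym : (piece i j P Q (true, false)).take 2 = [(i,true),(j,false)] := by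
  rw [piece]
  have : Q = (Q - 1) + 1 := by omega
  rw [this, List.replicate_succ]
  rfl

omit [DecidableEq α] in
include hP in
lemma piece_last_xp : (piece i j P Q (false, true)).getLast? = some (i, true) := by
  rw [piece, List.getLast?_replicate, if_neg (by omega)]

omit [DecidableEq α] in
include hP in
lemma piece_last_xm : (piece i j P Q (false, false)).getLast? = some (i, false) := by
  rw [piece, List.getLast?_replicate, if_neg (by omega)]

omit [DecidableEq α] in
lemma piece_last_yp : (piece i j P Q (true, true)).getLast? = some (i, false) := by
  rw [piece, List.getLast?_concat]

omit [DecidableEq α] in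
include hQ in
lemma piece_last_ym : (piece i j P Q (true, false)).getLast? = some (j, false) := by
  rw [piece, ← List.singleton_append, List.getLast?_append_of_ne_nil _ (by simp; omega),
    List.getLast?_replicate, if_neg (by omega)]

include hij hP hQ in
lemma chain'_piece (c : Bool × Bool) : List.Chain' NC (piece i j P Q c) := by
  have hrep : ∀ (n : ℕ) (z : α × Bool), List.Chain' NC (List.replicate n z) :=
    fun n z => List.isChain_replicate_of_rel n (NC_refl z)
  obtain ⟨cb, cb2⟩ := c
  cases cb <;> cases cb2
  · exact hrep P (i, false)
  · exact hrep P (i, true)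
  · rw [piece]
    apply List.isChain_cons.mpr
    refine ⟨?_, hrep Q (j, false)⟩
    intro y hy
    rw [List.head?_replicate, if_neg (by omega : ¬ Q = 0)] at hy
    cases hy
    exact NC_of_ne hij
  · rw [piece]
    apply List.isChain_append.mpr
    refine ⟨hrep Q (j, true), List.isChain_singleton _, ?_⟩
    intro x hx y hy
    rw [List.getLast?_replicate, if_neg (by omega : ¬ Q = 0)] at hx
    cases hx; cases hy
    exact NC_of_ne' hij

include hP hQ in
lemma exists_W_cons (c : Bool × Bool) (cs : List (Bool × Bool)) :
    ∃ t, W_s14 i j P Q (c :: cs) = (piece i j P Q c).take 2 ++ t := by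
  have hlen := piece_len_ge hP hQ (i := i) (j := j) c
  cases cs with
  | nil => exact ⟨(piece i j P Q c).drop 2, by simp [W_s14]⟩
  | cons c' cs' =>
    by_cases hc : cancels c c'
    · refine ⟨(piece i j P Q c).dropLast.drop 2 ++ (W_s14 i j P Q (c' :: cs')).tail, ?_⟩
      simp only [W_s14, if_pos hc, ← List.append_assoc]
      congr 1
      have h2 : (piece i j P Q c).dropLast.take 2 = (piece i j P Q c).take 2 := by
        rw [List.dropLast_eq_take, List.take_take]
        congr 1
        omega
      rw [← h2, List.take_append_drop]
    · exact ⟨(piece i j P Q c).drop 2 ++ W_s14 i j P Q (c' :: cs'), by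
        simp only [W_s14, if_neg hc, ← List.append_assoc, List.take_append_drop]⟩

include hij hP hQ in
lemma prodW_toWord : ∀ (M : List (Bool × Bool)), List.Chain' NC M →
    toWord (prodW i j P Q M) = W_s14 i j P Q M := by
  intro M
  induction M with
  | nil => intro _; simp [prodW, W_s14, toWord_one]
  | cons c cs ih =>
    intro hch
    have hW : toWord (prodW i j P Q cs) = W_s14 i j P Q cs := ih hch.tail
    have hstep : toWord (prodW i j P Q (c :: cs)) = reduce (piece i j P Q c ++ W_s14 i j P Q cs) := by
      have h1 : prodW i j P Q (c :: cs) = mk (piece i j P Q c) * mk (W_s14 i j P Q cs) := by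
        rw [prodW, List.map_cons, List.prod_cons, ← prodW]
        congr 1
        rw [← hW, mk_toWord]
      rw [h1, mul_mk, toWord_mk]
    rw [hstep]
    have hchW : List.Chain' NC (W_s14 i j P Q cs) := hW ▸ chain'_toWord_s14 _
    cases cs with
    | nil =>
      simp only [W_s14, List.append_nil]
      exact reduce_eq_self_of_chain'_s14 (chain'_piece hij hP hQ c)
    | cons c' cs' =>
      have hNCc : NC c c' := (List.isChain_cons_cons.mp hch).1
      obtain ⟨t, ht⟩ := exists_W_cons hP hQ (i := i) (j := j) c' cs'
      obtain ⟨c1, c2⟩ := c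
      obtain ⟨d1, d2⟩ := c'
      cases c1 <;> cases c2 <;> cases d1 <;> cases d2
      -- 1: x⁻ x⁻
      · rw [show W_s14 i j P Q ((false,false)::(false,false)::cs') =
            piece i j P Q (false,false) ++ W_s14 i j P Q ((false,false)::cs') from by simp [W_s14, cancels]]
        refine reduce_eq_self_of_chain'_s14
          (List.isChain_append.mpr ⟨chain'_piece hij hP hQ _, hchW, ?_⟩)
        intro x hx y hy
        rw [piece_last_xm hP] at hx
        rw [ht, piece_take2_xm hP] at hy
        cases hx; cases hy
        exact NC_refl _
      -- 2: x⁻ x⁺ excluded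
      · exact absurd ⟨rfl, rfl⟩ hNCc
      -- 3: x⁻ y⁻ CANCEL
      · rw [show W_s14 i j P Q ((false,false)::(true,false)::cs') =
            (piece i j P Q (false,false)).dropLast ++ (W_s14 i j P Q ((true,false)::cs')).tail from by
              simp [W_s14, cancels]]
        rw [ht, piece_take2_ym hQ]
        rw [show piece i j P Q (false,false) = List.replicate P ((i:α),false) from rfl]
        rw [List.dropLast_replicate]
        have hrepl : List.replicate P ((i:α),false) =
            List.replicate (P-1) ((i:α),false) ++ [(i,false)] := by
          rw [← List.replicate_succ']
          congr 1
          omega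
        have heq : List.replicate P ((i:α),false) ++ ([(i,true),(j,false)] ++ t)
            = List.replicate (P-1) ((i:α),false) ++ (i,false) :: (i,!false) :: ((j,false)::t) := by
          rw [hrepl]; simp
        rw [heq, reduce_cancel_boundary ?hch3]
        · rfl
        case hch3 =>
          refine List.isChain_append.mpr ⟨List.isChain_replicate_of_rel _ (NC_refl _), ?_, ?_⟩
          · rw [ht, piece_take2_ym hQ] at hchW
            exact hchW.tail
          · intro x hx y hy
            rw [List.getLast?_replicate, if_neg (by omega : ¬ P - 1 = 0)] at hx
            cases hx; cases hy
            exact NC_of_ne hij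
      -- 4: x⁻ y⁺
      · rw [show W_s14 i j P Q ((false,false)::(true,true)::cs') =
            piece i j P Q (false,false) ++ W_s14 i j P Q ((true,true)::cs') from by simp [W_s14, cancels]]
        refine reduce_eq_self_of_chain'_s14
          (List.isChain_append.mpr ⟨chain'_piece hij hP hQ _, hchW, ?_⟩)
        intro x hx y hy
        rw [piece_last_xm hP] at hx
        rw [ht, piece_take2_yp hQ] at hy
        cases hx; cases hy
        exact NC_of_ne hij
      -- 5: x⁺ x⁻ excluded
      · exact absurd ⟨rfl, rfl⟩ hNCc
      -- 6: x⁺ x⁺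
      · rw [show W_s14 i j P Q ((false,true)::(false,true)::cs') =
            piece i j P Q (false,true) ++ W_s14 i j P Q ((false,true)::cs') from by simp [W_s14, cancels]]
        refine reduce_eq_self_of_chain'_s14
          (List.isChain_append.mpr ⟨chain'_piece hij hP hQ _, hchW, ?_⟩)
        intro x hx y hy
        rw [piece_last_xp hP] at hx
        rw [ht, piece_take2_xp hP] at hy
        cases hx; cases hy
        exact NC_refl _
      -- 7: x⁺ y⁻
      · rw [show W_s14 i j P Q ((false,true)::(true,false)::cs') =
            piece i j P Q (false,true) ++ W_s14 i j P Q ((true,false)::cs') from by simp [W_s14, cancels]]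
        refine reduce_eq_self_of_chain'_s14
          (List.isChain_append.mpr ⟨chain'_piece hij hP hQ _, hchW, ?_⟩)
        intro x hx y hy
        rw [piece_last_xp hP] at hx
        rw [ht, piece_take2_ym hQ] at hy
        cases hx; cases hy
        exact NC_refl _
      -- 8: x⁺ y⁺
      · rw [show W_s14 i j P Q ((false,true)::(true,true)::cs') =
            piece i j P Q (false,true) ++ W_s14 i j P Q ((true,true)::cs') from by simp [W_s14, cancels]]
        refine reduce_eq_self_of_chain'_s14
          (List.isChain_append.mpr ⟨chain'_piece hij hP hQ _, hchW, ?_⟩)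
        intro x hx y hy
        rw [piece_last_xp hP] at hx
        rw [ht, piece_take2_yp hQ] at hy
        cases hx; cases hy
        exact NC_of_ne hij
      -- 9: y⁻ x⁻
      · rw [show W_s14 i j P Q ((true,false)::(false,false)::cs') =
            piece i j P Q (true,false) ++ W_s14 i j P Q ((false,false)::cs') from by simp [W_s14, cancels]]
        refine reduce_eq_self_of_chain'_s14
          (List.isChain_append.mpr ⟨chain'_piece hij hP hQ _, hchW, ?_⟩)
        intro x hx y hy
        rw [piece_last_ym hQ] at hx
        rw [ht, piece_take2_xm hP] at hy
        cases hx; cases hy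
        exact NC_of_ne' hij
      -- 10: y⁻ x⁺
      · rw [show W_s14 i j P Q ((true,false)::(false,true)::cs') =
            piece i j P Q (true,false) ++ W_s14 i j P Q ((false,true)::cs') from by simp [W_s14, cancels]]
        refine reduce_eq_self_of_chain'_s14
          (List.isChain_append.mpr ⟨chain'_piece hij hP hQ _, hchW, ?_⟩)
        intro x hx y hy
        rw [piece_last_ym hQ] at hx
        rw [ht, piece_take2_xp hP] at hy
        cases hx; cases hy
        exact NC_of_ne' hij
      -- 11: y⁻ y⁻
      · rw [show W_s14 i j P Q ((true,false)::(true,false)::cs') =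
            piece i j P Q (true,false) ++ W_s14 i j P Q ((true,false)::cs') from by simp [W_s14, cancels]]
        refine reduce_eq_self_of_chain'_s14
          (List.isChain_append.mpr ⟨chain'_piece hij hP hQ _, hchW, ?_⟩)
        intro x hx y hy
        rw [piece_last_ym hQ] at hx
        rw [ht, piece_take2_ym hQ] at hy
        cases hx; cases hy
        exact NC_of_ne' hij
      -- 12: y⁻ y⁺ excluded
      · exact absurd ⟨rfl, rfl⟩ hNCc
      -- 13: y⁺ x⁻
      · rw [show W_s14 i j P Q ((true,true)::(false,false)::cs') =
            piece i j P Q (true,true) ++ W_s14 i j P Q ((false,false)::cs') from by simp [W_s14, cancels]]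
        refine reduce_eq_self_of_chain'_s14
          (List.isChain_append.mpr ⟨chain'_piece hij hP hQ _, hchW, ?_⟩)
        intro x hx y hy
        rw [piece_last_yp] at hx
        rw [ht, piece_take2_xm hP] at hy
        cases hx; cases hy
        exact NC_refl _
      -- 14: y⁺ x⁺ CANCEL
      · rw [show W_s14 i j P Q ((true,true)::(false,true)::cs') =
            (piece i j P Q (true,true)).dropLast ++ (W_s14 i j P Q ((false,true)::cs')).tail from by
              simp [W_s14, cancels]]
        rw [ht, piece_take2_xp hP]
        rw [show piece i j P Q (true,true) =
            List.replicate Q ((j:α),true) ++ [((i:α),false)] from rfl]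
        rw [List.dropLast_concat]
        have heq : (List.replicate Q ((j:α),true) ++ [((i:α),false)]) ++ ([(i,true),(i,true)] ++ t)
            = List.replicate Q ((j:α),true) ++ (i,false) :: (i,!false) :: ((i,true)::t) := by
          simp
        rw [heq, reduce_cancel_boundary ?hch14]
        · rfl
        case hch14 =>
          refine List.isChain_append.mpr ⟨List.isChain_replicate_of_rel _ (NC_refl _), ?_, ?_⟩
          · rw [ht, piece_take2_xp hP] at hchW
            exact hchW.tail
          · intro x hx y hy
            rw [List.getLast?_replicate, if_neg (by omega : ¬ Q = 0)] at hx
            cases hx; cases hy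
            exact NC_of_ne' hij
      -- 15: y⁺ y⁻ excluded
      · exact absurd ⟨rfl, rfl⟩ hNCc
      -- 16: y⁺ y⁺
      · rw [show W_s14 i j P Q ((true,true)::(true,true)::cs') =
            piece i j P Q (true,true) ++ W_s14 i j P Q ((true,true)::cs') from by simp [W_s14, cancels]]
        refine reduce_eq_self_of_chain'_s14
          (List.isChain_append.mpr ⟨chain'_piece hij hP hQ _, hchW, ?_⟩)
        intro x hx y hy
        rw [piece_last_yp] at hx
        rw [ht, piece_take2_yp hQ] at hy
        cases hx; cases hy
        exact NC_of_ne hij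


omit [DecidableEq α] in
lemma replicate_eq_cons {n : ℕ} (hn : 1 ≤ n) (z : α × Bool) :
    List.replicate n z = z :: List.replicate (n-1) z := by
  cases n with
  | zero => omega
  | succ m => simp [List.replicate_succ]

include hij hP hQ in
lemma adjc_piece_xm : adjc (piece i j P Q (false,false)) = P - 1 := by
  rw [show piece i j P Q (false,false) = List.replicate P ((i:α),false) from rfl, adjc_replicate]

include hij hP hQ in
lemma adjc_piece_xp : adjc (piece i j P Q (false,true)) = P - 1 := by
  rw [show piece i j P Q (false,true) = List.replicate P ((i:α),true) from rfl, adjc_replicate]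

include hij hP hQ in
lemma adjc_piece_ym : adjc (piece i j P Q (true,false)) = Q - 1 := by
  have e2 : List.replicate Q ((j:α),false) = ((j:α),false) :: List.replicate (Q-1) ((j:α),false) :=
    replicate_eq_cons (by omega) _
  rw [show piece i j P Q (true,false) = ((i:α),true) :: List.replicate Q ((j:α),false) from rfl,
    e2, adjc_cons_cons, if_neg (by simpa using hij), ← e2, adjc_replicate]
  omega

include hij hP hQ in
lemma adjc_piece_yp : adjc (piece i j P Q (true,true)) = Q - 1 := by
  rw [show piece i j P Q (true,true)
      = List.replicate Q ((j:α),true) ++ ((i:α),false) :: [] from rfl,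
    adjc_replicate_append Q (by omega), if_neg (by simpa using Ne.symm hij)]
  simp

include hij hP hQ in
lemma piece_ineq (c : Bool × Bool) :
    (piece i j P Q c).length ≤ (P + Q) * adjc (piece i j P Q c) := by
  obtain ⟨c1, c2⟩ := c
  have hPm : P + Q ≤ (P + Q) * (P - 1) := Nat.le_mul_of_pos_right _ (by omega)
  have hQm : P + Q ≤ (P + Q) * (Q - 1) := Nat.le_mul_of_pos_right _ (by omega)
  cases c1 <;> cases c2
  · rw [adjc_piece_xm hij hP hQ,
      show piece i j P Q (false,false) = List.replicate P ((i:α),false) from rfl,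
      List.length_replicate]
    omega
  · rw [adjc_piece_xp hij hP hQ,
      show piece i j P Q (false,true) = List.replicate P ((i:α),true) from rfl,
      List.length_replicate]
    omega
  · rw [adjc_piece_ym hij hP hQ,
      show piece i j P Q (true,false) = ((i:α),true) :: List.replicate Q ((j:α),false) from rfl]
    simp only [List.length_cons, List.length_replicate]
    omega
  · rw [adjc_piece_yp hij hP hQ,
      show piece i j P Q (true,true) = List.replicate Q ((j:α),true) ++ [((i:α),false)] from rfl]
    simp only [List.length_append, List.length_replicate, List.length_cons, List.length_nil]
    omega

include hij hP hQ in
lemma W_ineq : ∀ (M : List (Bool × Bool)), List.Chain' NC M → M ≠ [] →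
    (W_s14 i j P Q M).length ≤ (P + Q) * adjc (W_s14 i j P Q M) := by
  intro M
  induction M with
  | nil => intro _ h; exact absurd rfl h
  | cons c cs ih =>
    intro hch _
    cases cs with
    | nil =>
      rw [show W_s14 i j P Q [c] = piece i j P Q c from rfl]
      exact piece_ineq hij hP hQ c
    | cons c' cs' =>
      have hIH : (W_s14 i j P Q (c' :: cs')).length ≤ (P + Q) * adjc (W_s14 i j P Q (c' :: cs')) :=
        ih hch.tail (by simp)
      obtain ⟨t, ht⟩ := exists_W_cons hP hQ (i := i) (j := j) c' cs'
      by_cases hc : cancels c c'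
      · have hwM : W_s14 i j P Q (c :: c' :: cs') =
            (piece i j P Q c).dropLast ++ (W_s14 i j P Q (c' :: cs')).tail := by
          simp [W_s14, hc]
        obtain ⟨c1, c2⟩ := c
        obtain ⟨d1, d2⟩ := c'
        cases c1 <;> cases c2 <;> cases d1 <;> cases d2 <;> (try simp [cancels] at hc)
        · -- branch A : x⁻ y⁻
          rw [ht, piece_take2_ym hQ] at hIH
          rw [hwM, ht, piece_take2_ym hQ]
          rw [show piece i j P Q (false,false) = List.replicate P ((i:α),false) from rfl,
            List.dropLast_replicate]
          rw [show (([((i:α),true),((j:α),false)] ++ t).tail) = ((j:α),false) :: t from rfl]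
          rw [adjc_replicate_append (P-1) (by omega), if_neg (by simpa using hij)]
          rw [show ([((i:α),true),((j:α),false)] ++ t) = ((i:α),true) :: ((j:α),false) :: t
            from rfl] at hIH
          rw [adjc_cons_cons, if_neg (by simpa using hij)] at hIH
          simp only [List.length_append, List.length_replicate, List.length_cons,
            Nat.zero_add, Nat.add_zero] at hIH ⊢
          set A := adjc (((j:α),false) :: t) with hA
          have h2 : P + Q ≤ (P + Q) * (P - 1 - 1) := Nat.le_mul_of_pos_right _ (by omega)
          have h3 : (P + Q) * (P - 1 - 1 + A) = (P+Q) * (P-1-1) + (P+Q) * A := by ring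
          omega
        · -- branch B : y⁺ x⁺
          rw [ht, piece_take2_xp hP] at hIH
          rw [hwM, ht, piece_take2_xp hP]
          rw [show piece i j P Q (true,true)
              = List.replicate Q ((j:α),true) ++ [((i:α),false)] from rfl,
            List.dropLast_concat]
          rw [show (([((i:α),true),((i:α),true)] ++ t).tail) = ((i:α),true) :: t from rfl]
          rw [adjc_replicate_append Q (by omega), if_neg (by simpa using Ne.symm hij)]
          rw [show ([((i:α),true),((i:α),true)] ++ t) = ((i:α),true) :: ((i:α),true) :: t
            from rfl] at hIH
          rw [adjc_cons_cons, if_pos rfl] at hIH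
          simp only [List.length_append, List.length_replicate, List.length_cons,
            Nat.zero_add, Nat.add_zero] at hIH ⊢
          set A := adjc (((i:α),true) :: t) with hA
          have h2 : P + Q ≤ (P + Q) * (Q - 1 - 1) := Nat.le_mul_of_pos_right _ (by omega)
          have h3 : (P + Q) * (Q - 1 + A) = (P+Q) * (Q-1-1+1) + (P+Q) * A := by
            rw [show Q - 1 + A = (Q-1-1+1) + A from by omega, Nat.mul_add]
          have h4 : (P + Q) * (Q-1-1+1) = (P+Q)*(Q-1-1) + (P+Q) := by ring
          have h5 : (P + Q) * (1 + A) = (P+Q) + (P+Q)*A := by ring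
          omega
      · have hwM : W_s14 i j P Q (c :: c' :: cs') =
            piece i j P Q c ++ W_s14 i j P Q (c' :: cs') := by
          simp [W_s14, hc]
        rw [hwM]
        have h1 := adjc_append_ge (piece i j P Q c) (W_s14 i j P Q (c' :: cs'))
        have h2 := piece_ineq hij hP hQ (i := i) (j := j) (P := P) (Q := Q) c
        rw [List.length_append]
        have h3 : (P+Q) * (adjc (piece i j P Q c) + adjc (W_s14 i j P Q (c'::cs')))
            ≤ (P+Q) * adjc (piece i j P Q c ++ W_s14 i j P Q (c'::cs')) :=
          Nat.mul_le_mul_left _ h1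
        have h4 : (P+Q) * (adjc (piece i j P Q c) + adjc (W_s14 i j P Q (c'::cs')))
            = (P+Q) * adjc (piece i j P Q c) + (P+Q) * adjc (W_s14 i j P Q (c'::cs')) := by ring
        omega

include hij hP hQ in
lemma master_lemma (w : FreeGroup α)
    (hw : w ∈ Subgroup.closure {FreeGroup.of i ^ P, FreeGroup.of j ^ Q * (FreeGroup.of i)⁻¹})
    (hne : w ≠ 1) : w.toWord.length ≤ (P + Q) * adjc w.toWord := by
  classical
  set f : Bool → FreeGroup α :=
    fun γ => if γ then mk (piece i j P Q (true,true)) else mk (piece i j P Q (false,true)) with hf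
  have hx : FreeGroup.of i ^ P = mk (piece i j P Q (false,true)) := by
    rw [show piece i j P Q (false,true) = List.replicate P ((i:α),true) from rfl,
      ← toWord_of_pow, mk_toWord]
  have hy : FreeGroup.of j ^ Q * (FreeGroup.of i)⁻¹ = mk (piece i j P Q (true,true)) := by
    have h1 : FreeGroup.of j ^ Q = mk (List.replicate Q ((j:α),true)) := by
      rw [← toWord_of_pow, mk_toWord]
    have h2 : (FreeGroup.of i)⁻¹ = mk [((i:α),false)] := by
      rw [show FreeGroup.of i = mk [((i:α),true)] from rfl, inv_mk]
      rfl
    rw [h1, h2, mul_mk]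
    rfl
  have hrange : w ∈ (FreeGroup.lift f).range := by
    refine Subgroup.closure_le (FreeGroup.lift f).range |>.mpr ?_ hw
    rintro x (rfl | rfl)
    · exact ⟨FreeGroup.of false, by rw [FreeGroup.lift_apply_of, hx]; simp [hf]⟩
    · exact ⟨FreeGroup.of true, by rw [FreeGroup.lift_apply_of, hy]; simp [hf]⟩
  obtain ⟨u, hu⟩ := hrange
  have huw : w = prodW i j P Q u.toWord := by
    rw [← hu]
    conv_lhs => rw [← mk_toWord (x := u)]
    rw [FreeGroup.lift_mk, prodW]
    congr 1
    apply List.map_congr_left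
    rintro ⟨γ, s⟩ _
    cases γ <;> cases s <;> simp [hf, piece, inv_mk, invRev]
  have hchain : List.Chain' NC u.toWord := chain'_toWord_s14 u
  have hT : w.toWord = W_s14 i j P Q u.toWord := by
    rw [huw, prodW_toWord hij hP hQ _ hchain]
  have hnil : u.toWord ≠ [] := by
    intro h0
    apply hne
    rw [huw, prodW, h0]
    rfl
  rw [hT]
  exact W_ineq hij hP hQ u.toWord hchain hnil

end Main

section Upper

variable {α : Type*} [DecidableEq α]

/-- letters with distinct generators -/
def DG (u v : α × Bool) : Prop := u.1 ≠ v.1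

lemma adjc_eq_zero_of_chain' : ∀ {l : List (α × Bool)}, List.Chain' DG l → adjc l = 0
  | [], _ => rfl
  | [_], _ => rfl
  | x :: y :: t, h => by
    rw [adjc_cons_cons, if_neg (List.isChain_cons_cons.mp h).1,
      adjc_eq_zero_of_chain' (List.isChain_cons_cons.mp h).2]

variable {g : FreeGroup α} (hne : g.toWord ≠ [])
  (hchain : List.Chain' DG g.toWord)
  (hwrap : DG (g.toWord.getLast hne) (g.toWord.head hne))

include hne hchain hwrap in
lemma chain_flatten (n : ℕ) : List.Chain' DG (List.replicate n g.toWord).flatten := by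
  induction n with
  | zero => simp [List.Chain']
  | succ m ih =>
    rw [List.replicate_succ, List.flatten_cons]
    refine List.isChain_append.mpr ⟨hchain, ih, ?_⟩
    intro x hx y hy
    cases m with
    | zero => simp at hy
    | succ m' =>
      rw [List.replicate_succ, List.flatten_cons, List.head?_append_of_ne_nil _ hne] at hy
      rw [List.getLast?_eq_getLast hne] at hx
      rw [List.head?_eq_head hne] at hy
      cases hx; cases hy
      exact hwrap

include hne hchain hwrap in
lemma toWord_pow (n : ℕ) : (g ^ n).toWord = (List.replicate n g.toWord).flatten := by
  have hmk : g ^ n = mk (List.replicate n g.toWord).flatten := by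
    induction n with
    | zero => simp [FreeGroup.one_eq_mk]  -- maybe wrong name
    | succ m ih =>
      rw [pow_succ', ih, ← mk_toWord (x := g), mul_mk, mk_toWord, List.replicate_succ,
        List.flatten_cons]
  rw [hmk, toWord_mk]
  exact reduce_eq_self_of_chain'_s14
    ((chain_flatten hne hchain hwrap n).imp (fun _ _ hd => fun hc => hd hc.1))

end Upper

section Final
variable {α : Type*} [DecidableEq α]

lemma conj_pow_group {G : Type*} [Group G] (x y : G) (n : ℕ) :
    (x * y * x⁻¹) ^ n = x * y ^ n * x⁻¹ := by
  induction n with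
  | zero => simp
  | succ m ih => rw [pow_succ, ih, pow_succ]; group

lemma toWord_mul_length_le (x y : FreeGroup α) :
    ((x * y).toWord).length ≤ x.toWord.length + y.toWord.length := by
  have := (toWord_mul_sublist x y).length_le
  simpa using this

lemma no_conj {i j : α} (hij : i ≠ j) {P Q : ℕ} (hP : 3 ≤ P) (hQ : 3 ≤ Q)
    {g : FreeGroup α} (hne : g.toWord ≠ []) (hchain : List.Chain' DG g.toWord)
    (hwrap : DG (g.toWord.getLast hne) (g.toWord.head hne))
    (m : ℕ) (hm : 1 ≤ m) (h : FreeGroup α) :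
    h * g ^ m * h⁻¹ ∉
      Subgroup.closure {FreeGroup.of i ^ P, FreeGroup.of j ^ Q * (FreeGroup.of i)⁻¹} := by
  intro hmem
  set K := P + Q with hK
  set H1 := h.toWord.length with hH1
  set H2 := (h⁻¹).toWord.length with hH2
  set C := adjc h.toWord + adjc (h⁻¹).toWord + 2 + H1 + H2 with hC
  set n := K * C + H1 + H2 + 1 with hn
  set w := h * g ^ (m * n) * h⁻¹ with hw
  have hmem2 : w ∈ Subgroup.closure
      {FreeGroup.of i ^ P, FreeGroup.of j ^ Q * (FreeGroup.of i)⁻¹} := by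
    have := pow_mem hmem n
    rwa [conj_pow_group, ← pow_mul] at this
  have hTz : (g ^ (m*n)).toWord = (List.replicate (m*n) g.toWord).flatten :=
    toWord_pow hne hchain hwrap (m*n)
  have hZlen : (g ^ (m*n)).toWord.length = (m*n) * g.toWord.length := by
    rw [hTz]
    simp [List.length_flatten, List.map_replicate, List.sum_replicate, smul_eq_mul]
  have hZadj : adjc (g ^ (m*n)).toWord = 0 :=
    hTz ▸ adjc_eq_zero_of_chain' (chain_flatten hne hchain hwrap (m*n))
  have hne1 : w ≠ 1 := by
    intro h1
    have h2 : g ^ (m*n) = 1 := by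
      have := congrArg (fun z => h⁻¹ * z * h) h1
      simpa [hw, mul_assoc] using this
    have h3 := congrArg (fun z : FreeGroup α => z.toWord.length) h2
    simp only [toWord_one, List.length_nil, hZlen] at h3
    have hgl : 0 < g.toWord.length := List.length_pos_iff.mpr hne
    have h4 : 0 < m * n * g.toWord.length := Nat.mul_pos (Nat.mul_pos (by omega) (by omega)) hgl
    omega
  have hmaster := master_lemma hij hP hQ w hmem2 hne1
  rw [← hK] at hmaster
  -- upper bound for adjc w.toWord
  have hcat : mk (h.toWord ++ (g ^ (m*n)).toWord ++ (h⁻¹).toWord) = w := by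
    rw [← mul_mk, ← mul_mk, mk_toWord, mk_toWord, mk_toWord]
  have hTw : w.toWord = reduce (h.toWord ++ (g ^ (m*n)).toWord ++ (h⁻¹).toWord) := by
    rw [← hcat, toWord_mk]
  have hred := phi_reduce (h.toWord ++ (g ^ (m*n)).toWord ++ (h⁻¹).toWord)
  rw [← hTw] at hred
  have hadj1 : adjc (h.toWord ++ (g ^ (m*n)).toWord ++ (h⁻¹).toWord)
      ≤ adjc (h.toWord ++ (g ^ (m*n)).toWord) + adjc (h⁻¹).toWord + 1 := adjc_append_le _ _
  have hadj2 : adjc (h.toWord ++ (g ^ (m*n)).toWord)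
      ≤ adjc h.toWord + adjc (g ^ (m*n)).toWord + 1 := adjc_append_le _ _
  have hcatlen : (h.toWord ++ (g ^ (m*n)).toWord ++ (h⁻¹).toWord).length
      = H1 + (m*n) * g.toWord.length + H2 := by
    simp only [List.length_append, hZlen, hH1, hH2]
  -- lower bound for w.toWord length
  have hzw : g ^ (m*n) = h⁻¹ * (w * h) := by rw [hw]; group
  have hlow : (m*n) * g.toWord.length ≤ H2 + (w.toWord.length + H1) := by
    rw [← hZlen, hzw]
    calc ((h⁻¹ * (w * h)).toWord).length
        ≤ (h⁻¹).toWord.length + ((w * h).toWord).length := toWord_mul_length_le _ _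
      _ ≤ H2 + (w.toWord.length + H1) := by
          have := toWord_mul_length_le w h
          omega
  -- conclude adjc w.toWord ≤ C
  have hadjT : adjc w.toWord ≤ C := by omega
  have hKT : K * adjc w.toWord ≤ K * C := Nat.mul_le_mul_left _ hadjT
  have hbig : n ≤ (m*n) * g.toWord.length := by
    have hgl : 0 < g.toWord.length := List.length_pos_iff.mpr hne
    calc n = n * 1 := by ring
      _ ≤ n * (m * g.toWord.length) := Nat.mul_le_mul_left _
          (Nat.mul_pos (by omega) (List.length_pos_iff.mpr hne))
      _ = (m*n) * g.toWord.length := by ring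
  omega

end Final

/-- The subgroup `H₀` of the free group on two generators, generated by `a^(p+1)` and
`b^(q+1) * a⁻¹`. -/
def H₀ (p q : ℤ) : Subgroup (FreeGroup (Fin 2)) :=
  Subgroup.closure {a ^ (p + 1), b ^ (q + 1) * a⁻¹}

/-- The subgroup `H₁` of the free group on two generators, generated by `a^(p+1) * b⁻¹` and
`b^(q+1)`. -/
def H₁ (p q : ℤ) : Subgroup (FreeGroup (Fin 2)) :=
  Subgroup.closure {a ^ (p + 1) * b⁻¹, b ^ (q + 1)}

/-- Let `p, q ≥ 2` and let `g` have nonempty reduced word in which (cyclically) consecutive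
letters always involve distinct generators. Then for every `v ≥ 1`, no conjugate of `g ^ v`
lies in `H₀` or in `H₁`. -/
theorem stmt_14 (p q : ℤ) (hp : 2 ≤ p) (hq : 2 ≤ q) (g : FreeGroup (Fin 2))
    (hne : g.toWord ≠ [])
    (hcyc : ∀ i : Fin g.toWord.length,
      (g.toWord.get i).1 ≠
        (g.toWord.get ⟨(i.val + 1) % g.toWord.length,
          Nat.mod_lt _ (List.length_pos_iff.mpr hne)⟩).1)
    (v : ℤ) (hv : 1 ≤ v) (h : FreeGroup (Fin 2)) :
    h * g ^ v * h⁻¹ ∉ H₀ p q ∧ h * g ^ v * h⁻¹ ∉ H₁ p q := by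
  have hP' : 3 ≤ (p+1).toNat := by omega
  have hQ' : 3 ≤ (q+1).toNat := by omega
  have hga : a ^ (p+1) = FreeGroup.of (0 : Fin 2) ^ (p+1).toNat := by
    rw [show a = FreeGroup.of (0 : Fin 2) from rfl, ← zpow_natCast]
    congr 1
    omega
  have hgb : b ^ (q+1) = FreeGroup.of (1 : Fin 2) ^ (q+1).toNat := by
    rw [show b = FreeGroup.of (1 : Fin 2) from rfl, ← zpow_natCast]
    congr 1
    omega
  have hn0 : 0 < g.toWord.length := List.length_pos_iff.mpr hne
  have hchain : List.Chain' DG g.toWord := by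
    rw [List.Chain', List.isChain_iff_getElem]
    intro k hk
    have hk1 : k < g.toWord.length := by omega
    have h2 := hcyc ⟨k, hk1⟩
    have hmod : (k+1) % g.toWord.length = k + 1 := Nat.mod_eq_of_lt (by omega)
    simpa [DG, hmod] using h2
  have hwrap : DG (g.toWord.getLast hne) (g.toWord.head hne) := by
    have h2 := hcyc ⟨g.toWord.length - 1, by omega⟩
    have hmod : (g.toWord.length - 1 + 1) % g.toWord.length = 0 := by
      rw [Nat.sub_add_cancel (by omega), Nat.mod_self]
    simp only [hmod] at h2
    simpa [DG, List.getLast_eq_getElem, List.head_eq_getElem, List.get_eq_getElem] using h2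
  have hv1 : g ^ v = g ^ v.toNat := by
    rw [← zpow_natCast]
    congr 1
    omega
  constructor
  · intro hmem
    have hset : H₀ p q = Subgroup.closure
        {FreeGroup.of (0 : Fin 2) ^ (p+1).toNat,
          FreeGroup.of (1 : Fin 2) ^ (q+1).toNat * (FreeGroup.of (0 : Fin 2))⁻¹} := by
      rw [H₀, hga, hgb]
      rfl
    rw [hset, hv1] at hmem
    exact no_conj (show (0 : Fin 2) ≠ 1 by decide) hP' hQ' hne hchain hwrap
      v.toNat (by omega) h hmem
  · intro hmem
    have hset : H₁ p q = Subgroup.closure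
        {FreeGroup.of (1 : Fin 2) ^ (q+1).toNat,
          FreeGroup.of (0 : Fin 2) ^ (p+1).toNat * (FreeGroup.of (1 : Fin 2))⁻¹} := by
      rw [H₁, hga, hgb, Set.pair_comm]
      rfl
    rw [hset, hv1] at hmem
    exact no_conj (show (1 : Fin 2) ≠ 0 by decide) hQ' hP' hne hchain hwrap
      v.toNat (by omega) h hmem
end

section
/- For all integers p, q ≥ 2 and v ≥ 1, no conjugate of (b·a·b⁻¹·a⁻¹)^v in F₂ lies in H₀, and no conjugate of (b·a·b⁻¹·a⁻¹)^v lies in H₁; that is, for every h ∈ F₂, the element h·(b·a·b⁻¹·a⁻¹)^v·h⁻¹ belongs to neither H₀ nor H₁. -/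
/-- The affine permutation `z ↦ u * z + t` of `ℂ`, for `u ≠ 0`. -/
noncomputable def affinePerm (u t : ℂ) (hu : u ≠ 0) : Equiv.Perm ℂ where
  toFun z := u * z + t
  invFun z := u⁻¹ * (z - t)
  left_inv z := by field_simp; ring
  right_inv z := by field_simp; ring

@[simp] lemma affinePerm_apply (u t : ℂ) (hu : u ≠ 0) (z : ℂ) :
    affinePerm u t hu z = u * z + t := rfl

@[simp] lemma affinePerm_inv_apply (u t : ℂ) (hu : u ≠ 0) (z : ℂ) :
    (affinePerm u t hu)⁻¹ z = u⁻¹ * (z - t) := rfl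

/-- For `p, q ≥ 2` and `v ≥ 1`, no conjugate of `(b * a * b⁻¹ * a⁻¹) ^ v` (a power of the word
representing the surgery curve `γ` of Figure 3) lies in `H₀` or in `H₁`. -/
theorem stmt_15 (p q : ℤ) (hp : 2 ≤ p) (hq : 2 ≤ q) (v : ℤ) (hv : 1 ≤ v)
    (h : FreeGroup (Fin 2)) :
    h * (b * a * b⁻¹ * a⁻¹) ^ v * h⁻¹ ∉ H₀ p q ∧
    h * (b * a * b⁻¹ * a⁻¹) ^ v * h⁻¹ ∉ H₁ p q := by
  obtain ⟨n, hn3, hpn⟩ : ∃ n : ℕ, 3 ≤ n ∧ (p + 1 : ℤ) = n :=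
    ⟨(p + 1).toNat, by omega, by omega⟩
  obtain ⟨m, hm3, hqm⟩ : ∃ m : ℕ, 3 ≤ m ∧ (q + 1 : ℤ) = m :=
    ⟨(q + 1).toNat, by omega, by omega⟩
  obtain ⟨w, hw1, hvw⟩ : ∃ w : ℕ, 1 ≤ w ∧ v = w := ⟨v.toNat, by omega, by omega⟩
  set ω : ℂ := Complex.exp (2 * Real.pi * Complex.I / n) with hωdef
  set ζ : ℂ := Complex.exp (2 * Real.pi * Complex.I / m) with hζdef
  have hω : IsPrimitiveRoot ω n := Complex.isPrimitiveRoot_exp n (by omega)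
  have hζ : IsPrimitiveRoot ζ m := Complex.isPrimitiveRoot_exp m (by omega)
  have hωn : ω ^ n = 1 := hω.pow_eq_one
  have hζm : ζ ^ m = 1 := hζ.pow_eq_one
  have hω1 : ω ≠ 1 := hω.ne_one (by omega)
  have hζ1 : ζ ≠ 1 := hζ.ne_one (by omega)
  have hω0 : ω ≠ 0 := by
    intro hh; rw [hh, zero_pow (by omega : n ≠ 0)] at hωn; exact one_ne_zero hωn.symm
  have hζ0 : ζ ≠ 0 := by
    intro hh; rw [hh, zero_pow (by omega : m ≠ 0)] at hζm; exact one_ne_zero hζm.symm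
  set A : Equiv.Perm ℂ := affinePerm ω 0 hω0 with hAdef
  set B : Equiv.Perm ℂ := affinePerm ζ (1 - ζ) hζ0 with hBdef
  set φ : FreeGroup (Fin 2) →* Equiv.Perm ℂ := FreeGroup.lift ![A, B] with hφdef
  have hφa : φ a = A := by
    rw [hφdef, a, FreeGroup.lift_apply_of]; rfl
  have hφb : φ b = B := by
    rw [hφdef, b, FreeGroup.lift_apply_of]; rfl
  -- powers of A and B
  have hApow : ∀ (k : ℕ) (z : ℂ), (A ^ k) z = ω ^ k * z := by
    intro k
    induction k with
    | zero => intro z; simp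
    | succ k ih =>
      intro z
      rw [pow_succ, Equiv.Perm.mul_apply, hAdef, affinePerm_apply, ih, pow_succ]
      ring
  have hBpow : ∀ (k : ℕ) (z : ℂ), (B ^ k) z = ζ ^ k * (z - 1) + 1 := by
    intro k
    induction k with
    | zero => intro z; simp
    | succ k ih =>
      intro z
      rw [pow_succ, Equiv.Perm.mul_apply, hBdef, affinePerm_apply, ih, pow_succ]
      ring
  have hAn : A ^ n = 1 := by
    ext z; rw [hApow, hωn, one_mul]; rfl
  have hBm : B ^ m = 1 := by
    ext z; rw [hBpow, hζm, one_mul]; show z - 1 + 1 = z; ring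
  have hφap : φ (a ^ (p + 1)) = 1 := by
    rw [map_zpow, hφa, hpn, zpow_natCast, hAn]
  have hφbq : φ (b ^ (q + 1)) = 1 := by
    rw [map_zpow, hφb, hqm, zpow_natCast, hBm]
  -- the commutator maps to the translation by τ
  set τ : ℂ := (1 - ζ) * (1 - ω) with hτdef
  have hτ0 : τ ≠ 0 := mul_ne_zero (sub_ne_zero.mpr (Ne.symm hζ1)) (sub_ne_zero.mpr (Ne.symm hω1))
  set g : Equiv.Perm ℂ := φ (b * a * b⁻¹ * a⁻¹) with hgdef
  have hT : ∀ z : ℂ, g z = z + τ := by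
    intro z
    rw [hgdef]; simp only [map_mul, map_inv, hφa, hφb]
    rw [Equiv.Perm.mul_apply, Equiv.Perm.mul_apply, Equiv.Perm.mul_apply]
    rw [hAdef, hBdef, affinePerm_inv_apply, affinePerm_inv_apply, affinePerm_apply,
      affinePerm_apply, hτdef]
    field_simp
    ring
  have hTpow : ∀ (k : ℕ) (z : ℂ), (g ^ k) z = z + k * τ := by
    intro k
    induction k with
    | zero => intro z; simp
    | succ k ih =>
      intro z
      rw [pow_succ, Equiv.Perm.mul_apply, hT, ih]
      push_cast
      ring
  have hgv : ∀ z : ℂ, (g ^ v) z = z + w * τ := by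
    intro z
    rw [hvw, zpow_natCast, hTpow]
  -- key: if the conjugate is in the stabilizer of a point, contradiction
  have key : ∀ x : ℂ, φ (h * (b * a * b⁻¹ * a⁻¹) ^ v * h⁻¹) x ≠ x := by
    intro x hx
    rw [map_mul, map_mul, map_zpow, ← hgdef] at hx
    rw [Equiv.Perm.mul_apply, Equiv.Perm.mul_apply] at hx
    set z : ℂ := (φ h⁻¹) x with hzdef
    have h1 : (φ h) ((g ^ v) z) = (φ h) z := by
      rw [hx, hzdef, map_inv]
      exact (Equiv.apply_symm_apply (φ h) x).symm
    have h2 : (g ^ v) z = z := (φ h).injective h1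
    rw [hgv] at h2
    have h3 : (w : ℂ) * τ = 0 := by linear_combination h2
    rcases mul_eq_zero.mp h3 with h4 | h4
    · have : (w : ℂ) ≠ 0 := Nat.cast_ne_zero.mpr (by omega)
      exact this h4
    · exact hτ0 h4
  constructor
  · intro hmem
    have hle : H₀ p q ≤ (MulAction.stabilizer (Equiv.Perm ℂ) (0 : ℂ)).comap φ := by
      rw [H₀, Subgroup.closure_le]
      intro x hx
      simp only [Set.mem_insert_iff, Set.mem_singleton_iff] at hx
      rcases hx with rfl | rfl
      · simp only [SetLike.mem_coe, Subgroup.mem_comap, hφap]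
        exact one_mem _
      · simp only [SetLike.mem_coe, Subgroup.mem_comap, map_mul, map_inv, hφbq, hφa, one_mul]
        refine inv_mem ?_
        rw [MulAction.mem_stabilizer_iff, Equiv.Perm.smul_def, hAdef, affinePerm_apply]
        ring
    have := hle hmem
    rw [Subgroup.mem_comap, MulAction.mem_stabilizer_iff, Equiv.Perm.smul_def] at this
    exact key 0 this
  · intro hmem
    have hle : H₁ p q ≤ (MulAction.stabilizer (Equiv.Perm ℂ) (1 : ℂ)).comap φ := by
      rw [H₁, Subgroup.closure_le]
      intro x hx
      simp only [Set.mem_insert_iff, Set.mem_singleton_iff] at hx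
      rcases hx with rfl | rfl
      · simp only [SetLike.mem_coe, Subgroup.mem_comap, map_mul, map_inv, hφap, hφb, one_mul]
        refine inv_mem ?_
        rw [MulAction.mem_stabilizer_iff, Equiv.Perm.smul_def, hBdef, affinePerm_apply]
        ring
      · simp only [SetLike.mem_coe, Subgroup.mem_comap, hφbq]
        exact one_mem _
    have := hle hmem
    rw [Subgroup.mem_comap, MulAction.mem_stabilizer_iff, Equiv.Perm.smul_def] at this
    exact key 1 this
end
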